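/- arXiv:1908.03228 — 2 statements merged into one kernel-verified Lean document; each statement's English description precedes it below -/
import Mathlib

section
/- Let p > q be primes with p ≡ 1 (mod q) and g of order q mod p. For each γ with 1 < γ ≤ q, define on A = ℤ_p × ℤ_q the operations (n,m) + (s,t) = (n + g^m s, m+t) and (n,m) ∘ (s,t) = (n + g^{γm} s, m+t). Then each A_γ = (A,+,∘) is a bi-skew brace with additive group ℤ_p ⋊_g ℤ_q and |ker λ| = p, and the braces A_γ for distinct values of γ (mod q) are pairwise non-isomorphic, giving exactly q-1 isomorphism classes. -/
/-- `(op, e, inv)` is a group structure on `A`. -/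
def IsGroupOp {A : Type*} (op : A → A → A) (e : A) (inv : A → A) : Prop :=
  (∀ a b c, op (op a b) c = op a (op b c)) ∧ (∀ a, op e a = a) ∧ (∀ a, op a e = a) ∧
  (∀ a, op (inv a) a = e) ∧ (∀ a, op a (inv a) = e)

/-- `(A, add, mul)` is a skew left brace: both operations are group operations and
`a ∘ (b + c) = (a ∘ b - a) + a ∘ c`. -/
def IsSkewBrace {A : Type*} (add : A → A → A) (zero : A) (neg : A → A)
    (mul : A → A → A) (one : A) (inv : A → A) : Prop :=
  IsGroupOp add zero neg ∧ IsGroupOp mul one inv ∧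
  ∀ a b c, mul a (add b c) = add (add (mul a b) (neg a)) (mul a c)

section

variable (p q : ℕ) (g : ZMod p)

/-- The addition `(n,m) + (s,t) = (n + g^m s, m+t)` of `M = ℤ_p ⋊_g ℤ_q`. -/
def mAdd (x y : ZMod p × ZMod q) : ZMod p × ZMod q :=
  (x.1 + g ^ x.2.val * y.1, x.2 + y.2)

/-- The negation of `M = ℤ_p ⋊_g ℤ_q`. -/
def mNeg (x : ZMod p × ZMod q) : ZMod p × ZMod q :=
  (-(g ^ (q - x.2.val) * x.1), -x.2)

/-- The circle operation `(n,m) ∘ (s,t) = (n + g^{γm} s, m+t)` of `A_γ`. -/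
def gMul (γ : ℕ) (x y : ZMod p × ZMod q) : ZMod p × ZMod q :=
  (x.1 + g ^ (γ * x.2.val) * y.1, x.2 + y.2)

/-- The inverse for the circle operation of `A_γ`. -/
def gInv (γ : ℕ) (x : ZMod p × ZMod q) : ZMod p × ZMod q :=
  (-(g ^ (γ * (q - x.2.val)) * x.1), -x.2)

end


namespace St18
variable {p q : ℕ} {g : ZMod p}

lemma pow_mod (hgq : g ^ q = 1) (n : ℕ) : g ^ (n % q) = g ^ n := by
  conv_rhs => rw [← Nat.div_add_mod n q, pow_add, pow_mul, hgq, one_pow, one_mul]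

lemma pow_val_add [NeZero q] (hgq : g ^ q = 1) (x y : ZMod q) :
    g ^ (x + y).val = g ^ x.val * g ^ y.val := by
  rw [ZMod.val_add, pow_mod hgq, pow_add]

lemma pow_q_sub_mul [NeZero q] (hgq : g ^ q = 1) (x : ZMod q) :
    g ^ (q - x.val) * g ^ x.val = 1 := by
  rw [← pow_add, Nat.sub_add_cancel (le_of_lt (ZMod.val_lt x)), hgq]

lemma pow_val_neg [NeZero q] (hgq : g ^ q = 1) (x : ZMod q) :
    g ^ (-x).val = g ^ (q - x.val) := by
  rw [ZMod.neg_val]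
  split_ifs with h
  · simp [h, hgq]
  · rw [← pow_mod hgq (q - x.val), Nat.mod_eq_of_lt]
    have h1 : 0 < x.val := by
      rcases Nat.eq_zero_or_pos x.val with h0 | h0
      · exact absurd ((ZMod.val_eq_zero x).mp h0) h
      · exact h0
    have h2 : x.val < q := ZMod.val_lt x
    omega

lemma gMul_eq_mAdd (γ : ℕ) : gMul p q g γ = mAdd p q (g ^ γ) := by
  funext x y; simp [gMul, mAdd, pow_mul]

lemma gInv_eq_mNeg (γ : ℕ) : gInv p q g γ = mNeg p q (g ^ γ) := by
  funext x; simp [gInv, mNeg, pow_mul]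

lemma zero_eq : (0 : ZMod p × ZMod q) = (0, 0) := rfl

lemma isGroupOp_mAdd [NeZero q] (hgq : g ^ q = 1) :
    IsGroupOp (mAdd p q g) 0 (mNeg p q g) := by
  refine ⟨?_, ?_, ?_, ?_, ?_⟩
  · intro a b c
    simp only [mAdd, Prod.mk.injEq, pow_val_add hgq]
    exact ⟨by ring, by ring⟩
  · intro a; simp [mAdd, ZMod.val_zero]
  · intro a; simp [mAdd]
  · intro a
    simp only [mAdd, mNeg, zero_eq, Prod.mk.injEq, pow_val_neg hgq]
    exact ⟨by ring, by ring⟩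
  · intro a
    simp only [mAdd, mNeg, zero_eq, Prod.mk.injEq]
    exact ⟨by linear_combination (-a.1) * pow_q_sub_mul hgq a.2, by ring⟩

/-- The skew brace distributivity law, for two commuting "g"s. -/
lemma brace_law [NeZero q] (g1 g2 : ZMod p) (h1 : g1 ^ q = 1) (a b c : ZMod p × ZMod q) :
    mAdd p q g2 a (mAdd p q g1 b c) =
      mAdd p q g1 (mAdd p q g1 (mAdd p q g2 a b) (mNeg p q g1 a)) (mAdd p q g2 a c) := by
  simp only [mAdd, mNeg, Prod.mk.injEq, pow_val_add h1, pow_val_neg h1]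
  constructor
  · linear_combination (-(g2 ^ a.2.val * g1 ^ b.2.val * c.1)) * pow_q_sub_mul h1 a.2
  · ring
lemma pow_val_inj [NeZero q] (hg : orderOf g = q) {a b : ℕ} (h : g ^ a = g ^ b) : a % q = b % q := by
  have hgq : g ^ q = 1 := by rw [← hg]; exact pow_orderOf_eq_one g
  have hq0 : 0 < q := Nat.pos_of_ne_zero (NeZero.ne q)
  apply pow_injOn_Iio_orderOf (by rw [hg]; exact Set.mem_Iio.mpr (Nat.mod_lt _ hq0))
    (by rw [hg]; exact Set.mem_Iio.mpr (Nat.mod_lt _ hq0))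
  simpa only [pow_mod hgq] using h

lemma ker_eq [NeZero q] (hq : q.Prime) (hg : orderOf g = q) (γ : ℕ) (hγ1 : 1 < γ) (hγq : γ ≤ q) :
    {a : ZMod p × ZMod q | ∀ b, gMul p q g γ a b = mAdd p q g a b} = {a | a.2 = 0} := by
  ext a
  simp only [Set.mem_setOf_eq]
  constructor
  · intro h
    have h1 := h ((1 : ZMod p), (0 : ZMod q))
    simp only [gMul, mAdd, Prod.mk.injEq, mul_one] at h1
    have h2 : g ^ (γ * a.2.val) = g ^ a.2.val := add_left_cancel h1.1
    have h3 := pow_val_inj hg h2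
    have h4 : q ∣ γ * a.2.val - a.2.val :=
      (Nat.modEq_iff_dvd' (Nat.le_mul_of_pos_left _ (by omega))).mp h3.symm
    have h5 : γ * a.2.val - a.2.val = (γ - 1) * a.2.val := by rw [Nat.sub_mul, one_mul]
    rw [h5] at h4
    rcases (Nat.Prime.dvd_mul hq).mp h4 with h6 | h6
    · have := Nat.le_of_dvd (by omega) h6; omega
    · have hv : a.2.val < q := ZMod.val_lt a.2
      have : a.2.val = 0 := by
        rcases Nat.eq_zero_or_pos a.2.val with h0 | h0
        · exact h0
        · have := Nat.le_of_dvd h0 h6; omega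
      exact (ZMod.val_eq_zero a.2).mp this
  · intro h b
    simp [gMul, mAdd, h]

lemma card_ker [NeZero p] [NeZero q] :
    Nat.card {a : ZMod p × ZMod q | a.2 = 0} = p := by
  have e : {a : ZMod p × ZMod q // a.2 = 0} ≃ ZMod p :=
    { toFun := fun x => x.1.1
      invFun := fun n => ⟨(n, 0), rfl⟩
      left_inv := by rintro ⟨⟨n, m⟩, h⟩; simp at h; simp [h]
      right_inv := fun n => rfl }
  have : {a : ZMod p × ZMod q | a.2 = 0} = {a : ZMod p × ZMod q | a.2 = 0} := rfl
  calc Nat.card {a : ZMod p × ZMod q | a.2 = 0} = Nat.card (ZMod p) := Nat.card_congr e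
  _ = p := Nat.card_zmod p

lemma part1 (hp : p.Prime) (hq : q.Prime) (hg : orderOf g = q) (γ : ℕ)
    (hγ1 : 1 < γ) (hγq : γ ≤ q) :
    IsSkewBrace (mAdd p q g) 0 (mNeg p q g) (gMul p q g γ) 0 (gInv p q g γ) ∧
      IsSkewBrace (gMul p q g γ) 0 (gInv p q g γ) (mAdd p q g) 0 (mNeg p q g) ∧
      Nat.card {a : ZMod p × ZMod q | ∀ b, gMul p q g γ a b = mAdd p q g a b} = p := by
  haveI : NeZero q := ⟨hq.ne_zero⟩
  haveI : NeZero p := ⟨hp.ne_zero⟩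
  have hgq : g ^ q = 1 := by rw [← hg]; exact pow_orderOf_eq_one g
  have hgγq : (g ^ γ) ^ q = 1 := by rw [← pow_mul, mul_comm, pow_mul, hgq, one_pow]
  refine ⟨⟨isGroupOp_mAdd hgq, ?_, ?_⟩, ⟨?_, isGroupOp_mAdd hgq, ?_⟩, ?_⟩
  · rw [gMul_eq_mAdd, gInv_eq_mNeg]; exact isGroupOp_mAdd hgγq
  · intro a b c
    rw [gMul_eq_mAdd]
    exact brace_law g (g ^ γ) hgq a b c
  · rw [gMul_eq_mAdd, gInv_eq_mNeg]; exact isGroupOp_mAdd hgγq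
  · intro a b c
    rw [gMul_eq_mAdd, gInv_eq_mNeg]
    exact brace_law (g ^ γ) g hgγq a b c
  · rw [ker_eq hq hg γ hγ1 hγq]; exact card_ker
section GOP
variable {A : Type*} {op : A → A → A} {e : A} {inv : A → A}

lemma gop_idem (h : IsGroupOp op e inv) {x : A} (hx : op x x = x) : x = e := by
  obtain ⟨ha, hl, hr, hil, hir⟩ := h
  calc x = op e x := (hl x).symm
  _ = op (op (inv x) x) x := by rw [hil]
  _ = op (inv x) (op x x) := ha _ _ _
  _ = op (inv x) x := by rw [hx]
  _ = e := hil x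

lemma gop_inv_unique (h : IsGroupOp op e inv) {x y : A} (hxy : op x y = e) : y = inv x := by
  obtain ⟨ha, hl, hr, hil, hir⟩ := h
  calc y = op e y := (hl y).symm
  _ = op (op (inv x) x) y := by rw [hil]
  _ = op (inv x) (op x y) := ha _ _ _
  _ = op (inv x) e := by rw [hxy]
  _ = inv x := hr _

end GOP

section Hom
variable {A B : Type*} {opA : A → A → A} {eA : A} {invA : A → A}
  {opB : B → B → B} {eB : B} {invB : B → B}

lemma hom_id (hA : IsGroupOp opA eA invA) (hB : IsGroupOp opB eB invB)
    (f : A → B) (hf : ∀ a b, f (opA a b) = opB (f a) (f b)) : f eA = eB :=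
  gop_idem hB (by rw [← hf, (hA.2.1 eA)])

lemma hom_inv (hA : IsGroupOp opA eA invA) (hB : IsGroupOp opB eB invB)
    (f : A → B) (hf : ∀ a b, f (opA a b) = opB (f a) (f b)) (x : A) :
    f (invA x) = invB (f x) := by
  apply gop_inv_unique hB
  rw [← hf, hA.2.2.2.2 x, hom_id hA hB f hf]

end Hom
lemma add_hom_eq_mul [NeZero p] (f : ZMod p → ZMod p) (hf : ∀ a b, f (a + b) = f a + f b)
    (x : ZMod p) : f x = f 1 * x := by
  have h0 : f 0 = 0 := by
    have h := hf 0 0; rw [add_zero] at h; exact (left_eq_add.mp h)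
  have hnat : ∀ k : ℕ, f (k : ZMod p) = f 1 * k := by
    intro k; induction k with
    | zero => simpa using h0
    | succ n ih => push_cast; rw [hf, ih]; ring
  conv_lhs => rw [← ZMod.natCast_rightInverse x]
  rw [hnat x.val, ZMod.natCast_rightInverse x]

lemma part2 (hp : p.Prime) (hq : q.Prime) (hlt : q < p) (hg : orderOf g = q)
    (γ γ' : ℕ) (hγ1 : 1 < γ) (hγq : γ ≤ q) (hγ'1 : 1 < γ') (hγ'q : γ' ≤ q) (hne : γ ≠ γ')
    (e : (ZMod p × ZMod q) ≃ (ZMod p × ZMod q))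
    (hadd : ∀ a b, e (mAdd p q g a b) = mAdd p q g (e a) (e b))
    (hmul : ∀ a b, e (gMul p q g γ a b) = gMul p q g γ' (e a) (e b)) : False := by
  haveI : NeZero q := ⟨hq.ne_zero⟩
  haveI : NeZero p := ⟨hp.ne_zero⟩
  haveI : Fact (1 < q) := ⟨hq.one_lt⟩
  haveI : Fact p.Prime := ⟨hp⟩
  have hgq : g ^ q = 1 := by rw [← hg]; exact pow_orderOf_eq_one g
  have hgγq : (g ^ γ) ^ q = 1 := by rw [← pow_mul, mul_comm, pow_mul, hgq, one_pow]
  have hgγ'q : (g ^ γ') ^ q = 1 := by rw [← pow_mul, mul_comm, pow_mul, hgq, one_pow]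
  have hA : IsGroupOp (mAdd p q g) 0 (mNeg p q g) := isGroupOp_mAdd hgq
  have hGγ : IsGroupOp (gMul p q g γ) 0 (gInv p q g γ) := by
    rw [gMul_eq_mAdd, gInv_eq_mNeg]; exact isGroupOp_mAdd hgγq
  have hGγ' : IsGroupOp (gMul p q g γ') 0 (gInv p q g γ') := by
    rw [gMul_eq_mAdd, gInv_eq_mNeg]; exact isGroupOp_mAdd hgγ'q
  have he0 : e 0 = 0 := hom_id hA hA e hadd
  have heneg : ∀ x, e (mNeg p q g x) = mNeg p q g (e x) := hom_inv hA hA e hadd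
  have heinv : ∀ x, e (gInv p q g γ x) = gInv p q g γ' (e x) := hom_inv hGγ hGγ' e hmul
  -- e preserves the subgroup P = ZMod p × {0}
  have hker : ∀ a : ZMod p × ZMod q, a.2 = 0 → (e a).2 = 0 := by
    intro a ha
    have hmem : ∀ b, gMul p q g γ a b = mAdd p q g a b := by
      have : a ∈ {a : ZMod p × ZMod q | a.2 = 0} := ha
      rw [← ker_eq hq hg γ hγ1 hγq] at this; exact this
    have h2 : ∀ b, gMul p q g γ' (e a) b = mAdd p q g (e a) b := by
      intro b
      calc gMul p q g γ' (e a) b = gMul p q g γ' (e a) (e (e.symm b)) := by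
            rw [e.apply_symm_apply]
      _ = e (gMul p q g γ a (e.symm b)) := (hmul _ _).symm
      _ = e (mAdd p q g a (e.symm b)) := by rw [hmem]
      _ = mAdd p q g (e a) (e (e.symm b)) := hadd _ _
      _ = mAdd p q g (e a) b := by rw [e.apply_symm_apply]
    have : e a ∈ {x : ZMod p × ZMod q | x.2 = 0} := by
      rw [← ker_eq hq hg γ' hγ'1 hγ'q]; exact h2
    exact this
  -- e on P is multiplication by a nonzero α
  set α := (e ((1 : ZMod p), (0 : ZMod q))).1 with hα
  have heP : ∀ n : ZMod p, e (n, 0) = (α * n, 0) := by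
    have hsnd : ∀ n : ZMod p, (e (n, 0)).2 = 0 := fun n => hker _ rfl
    have hf : ∀ a b : ZMod p, (e (a + b, 0)).1 = (e (a, 0)).1 + (e (b, 0)).1 := by
      intro a b
      have h1 : mAdd p q g (a, 0) (b, 0) = (a + b, 0) := by simp [mAdd]
      have h2 := hadd (a, (0 : ZMod q)) (b, 0)
      rw [h1] at h2
      rw [h2]
      simp [mAdd, hsnd a]
    intro n
    have := add_hom_eq_mul (fun n : ZMod p => (e (n, 0)).1) hf n
    exact Prod.ext (by simpa [mul_comm] using this) (hsnd n)
  have hα0 : α ≠ 0 := by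
    intro h
    have h1 : e ((1 : ZMod p), (0 : ZMod q)) = e 0 := by
      rw [heP 1, he0, h, zero_mul]; rfl
    have := e.injective h1
    rw [zero_eq, Prod.mk.injEq] at this
    exact one_ne_zero this.1
  have hval1 : (1 : ZMod q).val = 1 := ZMod.val_one q
  set t : ZMod p × ZMod q := ((0 : ZMod p), (1 : ZMod q)) with ht
  set c := (e t).1 with hc
  set δ := (e t).2 with hδ
  have het : e t = (c, δ) := rfl
  -- additive conjugation: e acts trivially on the quotient
  have hδ1 : δ.val = 1 := by
    have hconj : ∀ n : ZMod p,
        mAdd p q g (mAdd p q g t (n, 0)) (mNeg p q g t) = (g * n, 0) := by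
      intro n; simp [mAdd, mNeg, hval1, ht]
    have key : ∀ n : ZMod p, (α * (g * n), (0 : ZMod q)) =
        mAdd p q g (mAdd p q g (c, δ) (α * n, 0)) (mNeg p q g (c, δ)) := by
      intro n
      calc (α * (g * n), (0 : ZMod q)) = e (g * n, 0) := (heP _).symm
      _ = e (mAdd p q g (mAdd p q g t (n, 0)) (mNeg p q g t)) := by rw [hconj]
      _ = mAdd p q g (mAdd p q g (e t) (e (n, 0))) (e (mNeg p q g t)) := by
            rw [hadd, hadd]
      _ = mAdd p q g (mAdd p q g (c, δ) (α * n, 0)) (mNeg p q g (c, δ)) := by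
            rw [heneg, het, heP]
    have k1 := key 1
    simp only [mAdd, mNeg, Prod.mk.injEq, add_zero] at k1
    have k2 := k1.1
    have hqs : g ^ δ.val * g ^ (q - δ.val) = 1 := by
      rw [mul_comm]; exact pow_q_sub_mul hgq δ
    have k3 : α * g = g ^ δ.val * α := by linear_combination k2 - c * hqs
    have k4 : g ^ 1 = g ^ δ.val :=
      mul_left_cancel₀ hα0 (by rw [pow_one]; linear_combination k3)
    have := pow_val_inj hg k4
    rw [Nat.mod_eq_of_lt hq.one_lt, Nat.mod_eq_of_lt (ZMod.val_lt δ)] at this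
    exact this.symm
  have hδeq : δ = 1 := by
    have : ((δ.val : ℕ) : ZMod q) = δ := ZMod.natCast_rightInverse δ
    rw [hδ1] at this; rw [← this]; norm_num
  -- multiplicative conjugation
  have hγγ' : g ^ γ = g ^ γ' := by
    have hq1 : γ * 1 = γ := mul_one γ
    have hconj : ∀ n : ZMod p,
        gMul p q g γ (gMul p q g γ t (n, 0)) (gInv p q g γ t) = (g ^ γ * n, 0) := by
      intro n; simp [gMul, gInv, hval1, ht]
    have key : ∀ n : ZMod p, (α * (g ^ γ * n), (0 : ZMod q)) =
        gMul p q g γ' (gMul p q g γ' (c, 1) (α * n, 0)) (gInv p q g γ' (c, 1)) := by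
      intro n
      calc (α * (g ^ γ * n), (0 : ZMod q)) = e (g ^ γ * n, 0) := (heP _).symm
      _ = e (gMul p q g γ (gMul p q g γ t (n, 0)) (gInv p q g γ t)) := by rw [hconj]
      _ = gMul p q g γ' (gMul p q g γ' (e t) (e (n, 0))) (e (gInv p q g γ t)) := by
            rw [hmul, hmul]
      _ = gMul p q g γ' (gMul p q g γ' (c, 1) (α * n, 0)) (gInv p q g γ' (c, 1)) := by
            rw [heinv, het, hδeq, heP]
    have k1 := key 1
    simp only [gMul, gInv, Prod.mk.injEq, add_zero, hval1] at k1
    have k2 := k1.1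
    have hqs : g ^ (γ' * 1) * g ^ (γ' * (q - 1)) = 1 := by
      rw [← pow_add]
      have : γ' * 1 + γ' * (q - 1) = γ' * q := by
        rw [← Nat.mul_add]
        congr 1
        omega
      rw [this, mul_comm γ' q, pow_mul, hgq, one_pow]
    have k3 : α * g ^ γ = g ^ (γ' * 1) * α := by linear_combination k2 - c * hqs
    rw [mul_one] at k3
    exact mul_left_cancel₀ hα0 (by linear_combination k3)
  have := pow_val_inj hg hγγ'
  have h1 : γ % q = γ' % q := this
  rcases Nat.lt_or_ge γ q with h2 | h2
  · rcases Nat.lt_or_ge γ' q with h3 | h3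
    · rw [Nat.mod_eq_of_lt h2, Nat.mod_eq_of_lt h3] at h1; exact hne h1
    · have : γ' = q := le_antisymm hγ'q h3
      rw [Nat.mod_eq_of_lt h2, this, Nat.mod_self] at h1; omega
  · have hgg : γ = q := le_antisymm hγq h2
    rcases Nat.lt_or_ge γ' q with h3 | h3
    · rw [hgg, Nat.mod_self, Nat.mod_eq_of_lt h3] at h1; omega
    · have : γ' = q := le_antisymm hγ'q h3
      omega
section GOP2
variable {B : Type*} {op : B → B → B} {e : B} {inv : B → B}

lemma gop_inv_op_op (h : IsGroupOp op e inv) (a x : B) : op (inv a) (op a x) = x := by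
  rw [← h.1, h.2.2.2.1, h.2.1]

lemma gop_op_inv_op (h : IsGroupOp op e inv) (a x : B) : op a (op (inv a) x) = x := by
  rw [← h.1, h.2.2.2.2, h.2.1]

lemma gop_left_cancel (h : IsGroupOp op e inv) {a x y : B} (hxy : op a x = op a y) : x = y := by
  have h2 := congrArg (op (inv a)) hxy
  rwa [gop_inv_op_op h, gop_inv_op_op h] at h2

lemma gop_right_cancel (h : IsGroupOp op e inv) {a x y : B} (hxy : op x a = op y a) : x = y := by
  have h2 := congrArg (fun z => op z (inv a)) hxy
  simp only [h.1, h.2.2.2.2, h.2.2.1] at h2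
  exact h2

end GOP2

section SB
variable {B : Type*} {add : B → B → B} {zero : B} {neg : B → B}
  {mul : B → B → B} {one : B} {inv : B → B}

lemma sb_mul_zero (h : IsSkewBrace add zero neg mul one inv) (a : B) : mul a zero = a := by
  obtain ⟨hA, hM, hd⟩ := h
  have h1 := hd a zero zero
  rw [hA.2.1 zero] at h1
  have h3 : add (add (mul a zero) (neg a)) (mul a zero) = add zero (mul a zero) := by
    rw [hA.2.1]; exact h1.symm
  have h4 : add (mul a zero) (neg a) = zero := gop_right_cancel hA h3
  have h5 : add (add (mul a zero) (neg a)) a = add zero a := by rw [h4]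
  rw [hA.1, hA.2.2.2.1, hA.2.2.1, hA.2.1] at h5
  exact h5

lemma sb_one_eq_zero (h : IsSkewBrace add zero neg mul one inv) : one = zero := by
  have h1 := sb_mul_zero h one
  rw [h.2.1.2.1 zero] at h1
  exact h1.symm

end SB

/-- An additive endomorphism acting as `α ≠ 0` on the first factor fixes the
second component of `t = (0,1)`. -/
lemma snd_t_eq_one [NeZero p] [NeZero q] [Fact (1 < q)] (hp : p.Prime) (hq : q.Prime) (hg : orderOf g = q)
    (f : ZMod p × ZMod q → ZMod p × ZMod q)
    (hf : ∀ x y, f (mAdd p q g x y) = mAdd p q g (f x) (f y))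
    (α : ZMod p) (hα0 : α ≠ 0) (hfP : ∀ n : ZMod p, f (n, 0) = (α * n, 0)) :
    (f ((0 : ZMod p), (1 : ZMod q))).2 = 1 := by
  haveI : Fact p.Prime := ⟨hp⟩
  have hgq : g ^ q = 1 := by rw [← hg]; exact pow_orderOf_eq_one g
  have hA : IsGroupOp (mAdd p q g) 0 (mNeg p q g) := isGroupOp_mAdd hgq
  have hfneg : ∀ x, f (mNeg p q g x) = mNeg p q g (f x) := hom_inv hA hA f hf
  have hval1 : (1 : ZMod q).val = 1 := ZMod.val_one q
  set t : ZMod p × ZMod q := ((0 : ZMod p), (1 : ZMod q)) with ht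
  set c := (f t).1 with hc
  set δ := (f t).2 with hδ
  have het : f t = (c, δ) := rfl
  have hδ1 : δ.val = 1 := by
    have hconj : ∀ n : ZMod p,
        mAdd p q g (mAdd p q g t (n, 0)) (mNeg p q g t) = (g * n, 0) := by
      intro n; simp [mAdd, mNeg, hval1, ht]
    have key : ∀ n : ZMod p, (α * (g * n), (0 : ZMod q)) =
        mAdd p q g (mAdd p q g (c, δ) (α * n, 0)) (mNeg p q g (c, δ)) := by
      intro n
      calc (α * (g * n), (0 : ZMod q)) = f (g * n, 0) := (hfP _).symm
      _ = f (mAdd p q g (mAdd p q g t (n, 0)) (mNeg p q g t)) := by rw [hconj]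
      _ = mAdd p q g (mAdd p q g (f t) (f (n, 0))) (f (mNeg p q g t)) := by
            rw [hf, hf]
      _ = mAdd p q g (mAdd p q g (c, δ) (α * n, 0)) (mNeg p q g (c, δ)) := by
            rw [hfneg, het, hfP]
    have k1 := key 1
    simp only [mAdd, mNeg, Prod.mk.injEq, add_zero] at k1
    have k2 := k1.1
    have hqs : g ^ δ.val * g ^ (q - δ.val) = 1 := by
      rw [mul_comm]; exact pow_q_sub_mul hgq δ
    have k3 : α * g = g ^ δ.val * α := by linear_combination k2 - c * hqs
    have k4 : g ^ 1 = g ^ δ.val :=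
      mul_left_cancel₀ hα0 (by rw [pow_one]; linear_combination k3)
    have h5 := pow_val_inj hg k4
    rw [Nat.mod_eq_of_lt hq.one_lt, Nat.mod_eq_of_lt (ZMod.val_lt δ)] at h5
    exact h5.symm
  have h6 : ((δ.val : ℕ) : ZMod q) = δ := ZMod.natCast_rightInverse δ
  rw [hδ1] at h6
  show δ = 1
  rw [← h6]; norm_num
/-- Iterated `mAdd`. -/
def msmul (p q : ℕ) (g : ZMod p) : ℕ → (ZMod p × ZMod q) → (ZMod p × ZMod q)
  | 0, _ => 0
  | (k+1), x => mAdd p q g x (msmul p q g k x)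

lemma msmul_zero (x : ZMod p × ZMod q) : msmul p q g 0 x = 0 := rfl

lemma msmul_succ (k : ℕ) (x : ZMod p × ZMod q) :
    msmul p q g (k+1) x = mAdd p q g x (msmul p q g k x) := rfl

lemma msmul_snd [NeZero q] (k : ℕ) (x : ZMod p × ZMod q) :
    (msmul p q g k x).2 = (k : ZMod q) * x.2 := by
  induction k with
  | zero => simp [msmul_zero]
  | succ n ih => simp only [msmul_succ, mAdd, ih]; push_cast; ring

lemma msmul_P [NeZero q] (k : ℕ) (n : ZMod p) :
    msmul p q g k (n, 0) = ((k : ZMod p) * n, 0) := by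
  induction k with
  | zero => simp [msmul_zero]; rfl
  | succ m ih =>
    simp only [msmul_succ, mAdd, ih, ZMod.val_zero, pow_zero, one_mul]
    exact Prod.ext (by push_cast; ring) (by simp)

lemma msmul_t [NeZero q] (hq1 : 1 < q) (hgq : g ^ q = 1) (k : ℕ) (c : ZMod p) :
    ∃ F : ZMod p, msmul p q g k (c, 1) = (F, (k : ZMod q)) ∧ (g - 1) * F = (g ^ k - 1) * c := by
  induction k with
  | zero => exact ⟨0, by simp [msmul_zero]; rfl, by ring⟩
  | succ m ih =>
    obtain ⟨F, hF1, hF2⟩ := ih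
    have hval1 : (1 : ZMod q).val = 1 := by
      haveI : Fact (1 < q) := ⟨hq1⟩; exact ZMod.val_one q
    refine ⟨c + g * F, ?_, by ring_nf; ring_nf at hF2; linear_combination g * hF2⟩
    simp only [msmul_succ, hF1, mAdd, hval1, pow_one]
    push_cast
    exact Prod.ext (by ring) (by ring)

/-- A nonempty "subgroup" of `M` of cardinality `p` lies in `ZMod p × {0}`. -/
lemma K_sub_P [NeZero p] [NeZero q] (hp : p.Prime) (hq : q.Prime) (hlt : q < p)
    (hgq : g ^ q = 1) (K : Set (ZMod p × ZMod q))
    (hzero : 0 ∈ K) (haddK : ∀ x ∈ K, ∀ y ∈ K, mAdd p q g x y ∈ K)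
    (hnegK : ∀ x ∈ K, mNeg p q g x ∈ K) (hcard : Nat.card K = p) :
    ∀ x ∈ K, x.2 = 0 := by
  haveI : Fact q.Prime := ⟨hq⟩
  have hA : IsGroupOp (mAdd p q g) 0 (mNeg p q g) := isGroupOp_mAdd hgq
  by_contra hcon
  push_neg at hcon
  obtain ⟨x₀, hx₀K, hm⟩ := hcon
  set m := x₀.2 with hmdef
  have hmsK : ∀ k, msmul p q g k x₀ ∈ K := by
    intro k
    induction k with
    | zero => exact hzero
    | succ n ih => exact haddK _ hx₀K _ ih
  set cs : ZMod q → ZMod p × ZMod q := fun s => msmul p q g ((s * m⁻¹).val) x₀ with hcs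
  have hcsK : ∀ s, cs s ∈ K := fun s => hmsK _
  have hcs2 : ∀ s, (cs s).2 = s := by
    intro s
    rw [hcs]
    simp only
    rw [msmul_snd, ZMod.natCast_rightInverse]
    field_simp
    rfl
  set K0 : Set (ZMod p × ZMod q) := {y | y ∈ K ∧ y.2 = 0} with hK0
  have hF : Function.Bijective (fun z : K0 × ZMod q =>
      (⟨mAdd p q g z.1.1 (cs z.2), haddK _ z.1.2.1 _ (hcsK _)⟩ : K)) := by
    constructor
    · rintro ⟨⟨z, hz⟩, s⟩ ⟨⟨z', hz'⟩, s'⟩ h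
      simp only [Subtype.mk.injEq] at h
      have h2 : s = s' := by
        have := congrArg Prod.snd h
        simp only [mAdd] at this
        rw [hz.2, hz'.2] at this
        simpa [hcs2] using this
      subst h2
      have h3 : z = z' := gop_right_cancel hA h
      simp [h3]
    · rintro ⟨y, hy⟩
      refine ⟨⟨⟨mAdd p q g y (mNeg p q g (cs y.2)), haddK _ hy _ (hnegK _ (hcsK _)), ?_⟩, y.2⟩, ?_⟩
      · simp only [mAdd, mNeg]
        rw [hcs2]
        ring
      · apply Subtype.ext
        simp only
        rw [hA.1, hA.2.2.2.1, hA.2.2.1]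
  have hqdvd : q ∣ p := by
    have h1 : Nat.card K = Nat.card (K0 × ZMod q) := (Nat.card_eq_of_bijective _ hF).symm
    rw [Nat.card_prod, Nat.card_zmod, hcard] at h1
    exact Dvd.intro_left _ h1.symm
  rcases (Nat.Prime.eq_one_or_self_of_dvd hp q hqdvd) with h | h
  · exact hq.one_lt.ne' h
  · omega

/-- Every `q`-th root of unity is a power of `g`. -/
lemma exists_pow_eq [NeZero p] (hp : p.Prime) (hq : q.Prime) (hg : orderOf g = q)
    {α : ZMod p} (hαq : α ^ q = 1) : ∃ i, i < q ∧ α = g ^ i := by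
  haveI : Fact p.Prime := ⟨hp⟩
  classical
  set f : Polynomial (ZMod p) := Polynomial.X ^ q - Polynomial.C 1 with hf
  have hdeg : f.natDegree = q := by
    rw [hf]; exact Polynomial.natDegree_X_pow_sub_C
  have hf0 : f ≠ 0 := by
    intro h
    rw [h] at hdeg
    simp at hdeg
    exact hq.ne_zero hdeg.symm
  have hmem : ∀ x : ZMod p, x ^ q = 1 → x ∈ f.roots.toFinset := by
    intro x hx
    rw [Multiset.mem_toFinset, Polynomial.mem_roots hf0]
    simp [hf, Polynomial.IsRoot, hx]
  set T : Finset (ZMod p) := (Finset.range q).image (g ^ ·) with hT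
  have hTcard : T.card = q := by
    rw [hT, Finset.card_image_of_injOn, Finset.card_range]
    intro a ha b hb hab
    exact pow_injOn_Iio_orderOf (by simpa [hg] using Finset.mem_range.mp ha)
      (by simpa [hg] using Finset.mem_range.mp hb) hab
  have hsub : T ⊆ f.roots.toFinset := by
    intro x hx
    rw [hT, Finset.mem_image] at hx
    obtain ⟨i, hi, rfl⟩ := hx
    apply hmem
    rw [← pow_mul, mul_comm, pow_mul]
    rw [show g ^ q = 1 from by rw [← hg]; exact pow_orderOf_eq_one g]
    exact one_pow i
  have hle : f.roots.toFinset.card ≤ q := by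
    calc f.roots.toFinset.card ≤ Multiset.card f.roots := Multiset.toFinset_card_le _
    _ ≤ f.natDegree := Polynomial.card_roots' f
    _ = q := hdeg
  have hTeq : T = f.roots.toFinset := Finset.eq_of_subset_of_card_le hsub (by rw [hTcard]; exact hle)
  have hαmem : α ∈ T := by rw [hTeq]; exact hmem α hαq
  rw [hT, Finset.mem_image] at hαmem
  obtain ⟨i, hi, hgi⟩ := hαmem
  exact ⟨i, Finset.mem_range.mp hi, hgi.symm⟩

/-- Conjugation by `(d,0)` as an additive automorphism of `M`. -/
def conjE (p q : ℕ) (g : ZMod p) (d : ZMod p) : (ZMod p × ZMod q) ≃ (ZMod p × ZMod q) where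
  toFun x := (x.1 - (g ^ x.2.val - 1) * d, x.2)
  invFun x := (x.1 + (g ^ x.2.val - 1) * d, x.2)
  left_inv x := by simp
  right_inv x := by simp

lemma conjE_add [NeZero q] (hgq : g ^ q = 1) (d : ZMod p) (x y : ZMod p × ZMod q) :
    conjE p q g d (mAdd p q g x y) = mAdd p q g (conjE p q g d x) (conjE p q g d y) := by
  simp only [conjE, mAdd, Equiv.coe_fn_mk, Prod.mk.injEq]
  refine ⟨?_, trivial⟩
  have h := pow_val_add hgq x.2 y.2
  linear_combination (-d) * h
lemma main3 (hp : p.Prime) (hq : q.Prime) (hlt : q < p) (hmod : p % q = 1)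
    (hg : orderOf g = q)
    (mul' : (ZMod p × ZMod q) → (ZMod p × ZMod q) → (ZMod p × ZMod q))
    (inv' : (ZMod p × ZMod q) → (ZMod p × ZMod q))
    (hM : IsGroupOp mul' 0 inv')
    (hbr : ∀ a b c, mul' a (mAdd p q g b c) =
      mAdd p q g (mAdd p q g (mul' a b) (mNeg p q g a)) (mul' a c))
    (hcard : Nat.card {x : ZMod p × ZMod q | ∀ y, mul' x y = mAdd p q g x y} = p) :
    ∃ γ : ℕ, 1 < γ ∧ γ ≤ q ∧ ∃ d : ZMod p,
      ∀ a b, conjE p q g d (mul' a b) =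
        gMul p q g γ (conjE p q g d a) (conjE p q g d b) := by
  haveI : NeZero q := ⟨hq.ne_zero⟩
  haveI : NeZero p := ⟨hp.ne_zero⟩
  haveI : Fact (1 < q) := ⟨hq.one_lt⟩
  haveI : Fact p.Prime := ⟨hp⟩
  haveI : Fact q.Prime := ⟨hq⟩
  have hgq : g ^ q = 1 := by rw [← hg]; exact pow_orderOf_eq_one g
  have hg1 : g ≠ 1 := by
    intro h; rw [h, orderOf_one] at hg; have := hq.one_lt; omega
  have hgs1 : g - 1 ≠ 0 := sub_ne_zero_of_ne hg1
  have hA : IsGroupOp (mAdd p q g) 0 (mNeg p q g) := isGroupOp_mAdd hgq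
  have hval1 : (1 : ZMod q).val = 1 := ZMod.val_one q
  have mul'_zero : ∀ a, mul' a 0 = a := sb_mul_zero ⟨hA, hM, hbr⟩
  set lam : (ZMod p × ZMod q) → (ZMod p × ZMod q) → (ZMod p × ZMod q) :=
    fun a b => mAdd p q g (mNeg p q g a) (mul' a b) with hlam
  have lam_apply : ∀ a b, mul' a b = mAdd p q g a (lam a b) :=
    fun a b => (gop_op_inv_op hA a (mul' a b)).symm
  have lam_zero : ∀ a, lam a 0 = 0 := by
    intro a; rw [hlam]; simp only; rw [mul'_zero]; exact hA.2.2.2.1 a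
  have lam_add : ∀ a b c, lam a (mAdd p q g b c) = mAdd p q g (lam a b) (lam a c) := by
    intro a b c
    rw [hlam]; simp only
    rw [hbr]
    simp only [hA.1]
  have lam_mul : ∀ a b c, lam (mul' a b) c = lam a (lam b c) := by
    intro a b c
    have e1 : mAdd p q g a (mAdd p q g (lam a b) (lam a (lam b c))) =
        mAdd p q g a (mAdd p q g (lam a b) (lam (mul' a b) c)) := by
      calc mAdd p q g a (mAdd p q g (lam a b) (lam a (lam b c)))
          = mAdd p q g a (lam a (mAdd p q g b (lam b c))) := by rw [lam_add a b (lam b c)]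
      _ = mul' a (mAdd p q g b (lam b c)) := (lam_apply _ _).symm
      _ = mul' a (mul' b c) := by rw [← lam_apply b c]
      _ = mul' (mul' a b) c := (hM.1 a b c).symm
      _ = mAdd p q g (mul' a b) (lam (mul' a b) c) := lam_apply _ _
      _ = mAdd p q g (mAdd p q g a (lam a b)) (lam (mul' a b) c) := by
            rw [← lam_apply a b]
      _ = mAdd p q g a (mAdd p q g (lam a b) (lam (mul' a b) c)) := hA.1 _ _ _
    exact (gop_left_cancel hA (gop_left_cancel hA e1)).symm
  -- the kernel
  set Kset : Set (ZMod p × ZMod q) := {x | ∀ y, mul' x y = mAdd p q g x y} with hKset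
  have hKiff : ∀ x, x ∈ Kset ↔ ∀ y, lam x y = y := by
    intro x; constructor
    · intro h y; rw [hlam]; simp only; rw [h y]; exact gop_inv_op_op hA x y
    · intro h y; rw [lam_apply, h y]
  have hK0 : (0 : ZMod p × ZMod q) ∈ Kset := fun y => by rw [hM.2.1 y, hA.2.1 y]
  have hKadd : ∀ x ∈ Kset, ∀ y ∈ Kset, mAdd p q g x y ∈ Kset := by
    intro x hx y hy c
    calc mul' (mAdd p q g x y) c = mul' (mul' x y) c := by rw [hx y]
    _ = mul' x (mul' y c) := hM.1 x y c
    _ = mul' x (mAdd p q g y c) := by rw [hy c]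
    _ = mAdd p q g x (mAdd p q g y c) := hx _
    _ = mAdd p q g (mAdd p q g x y) c := (hA.1 x y c).symm
  have hKneg : ∀ x ∈ Kset, mNeg p q g x ∈ Kset := by
    intro x hx
    have hinvx : mNeg p q g x = inv' x :=
      gop_inv_unique hM (by rw [hx (mNeg p q g x)]; exact hA.2.2.2.2 x)
    intro b
    have hb : mul' x (mAdd p q g (mNeg p q g x) b) = b := by
      rw [hx]; exact gop_op_inv_op hA x b
    calc mul' (mNeg p q g x) b = mul' (inv' x) b := by rw [hinvx]
    _ = mul' (inv' x) (mul' x (mAdd p q g (mNeg p q g x) b)) := by rw [hb]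
    _ = mAdd p q g (mNeg p q g x) b := gop_inv_op_op hM x _
  have hKP : ∀ x ∈ Kset, x.2 = 0 := K_sub_P hp hq hlt hgq Kset hK0 hKadd hKneg hcard
  have hPK : ∀ x : ZMod p × ZMod q, x.2 = 0 → x ∈ Kset := by
    have hKeq : Kset = {x : ZMod p × ZMod q | x.2 = 0} := by
      apply Set.eq_of_subset_of_ncard_le hKP
      have h1 : Nat.card {x : ZMod p × ZMod q | x.2 = 0} = p := card_ker
      have h2 : Nat.card Kset = p := hcard
      rw [Nat.card_coe_set_eq] at h1 h2
      exact le_of_eq (h1.trans h2.symm)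
    intro x hx; rw [hKeq]; exact hx
  have lam_id_K : ∀ k ∈ Kset, ∀ y, lam k y = y := fun k hk => (hKiff k).mp hk
  -- lam commutes with msmul and preserves P
  have hmsmul_lam : ∀ a k x, lam a (msmul p q g k x) = msmul p q g k (lam a x) := by
    intro a k x
    induction k with
    | zero => rw [msmul_zero, msmul_zero]; exact lam_zero a
    | succ n ih => rw [msmul_succ, msmul_succ, lam_add, ih]
  have hcastpq : ((p : ℕ) : ZMod q) = 1 := by
    have := ZMod.natCast_mod p q
    rw [hmod] at this; rw [← this]; norm_num
  have hP_iff : ∀ x : ZMod p × ZMod q, x.2 = 0 ↔ msmul p q g p x = 0 := by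
    intro x
    constructor
    · intro hx
      have hx2 : x = (x.1, (0 : ZMod q)) := by rw [← hx]
      rw [hx2, msmul_P, ZMod.natCast_self, zero_mul, zero_eq]
    · intro hx
      have := congrArg Prod.snd hx
      rw [msmul_snd, hcastpq, one_mul] at this
      exact this
  have hlam_P : ∀ a (x : ZMod p × ZMod q), x.2 = 0 → (lam a x).2 = 0 := by
    intro a x hx
    apply (hP_iff _).mpr
    rw [← hmsmul_lam, (hP_iff x).mp hx]
    exact lam_zero a
  -- lam on P is multiplication by Alpha
  set Alpha : (ZMod p × ZMod q) → ZMod p :=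
    fun a => (lam a ((1 : ZMod p), (0 : ZMod q))).1 with hAl
  have hlamP : ∀ a (n : ZMod p), lam a (n, 0) = (Alpha a * n, 0) := by
    intro a n
    have hf : ∀ n n' : ZMod p,
        (lam a (n + n', 0)).1 = (lam a (n, 0)).1 + (lam a (n', 0)).1 := by
      intro n n'
      have h1 : mAdd p q g (n, 0) (n', 0) = (n + n', (0 : ZMod q)) := by simp [mAdd]
      have h2 := lam_add a (n, (0 : ZMod q)) (n', 0)
      rw [h1] at h2
      rw [h2]
      simp only [mAdd]
      rw [hlam_P a (n, 0) rfl]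
      simp
    have := add_hom_eq_mul (fun n : ZMod p => (lam a (n, 0)).1) hf n
    exact Prod.ext (by simpa [mul_comm] using this) (hlam_P a _ rfl)
  have hAlpha0 : ∀ a, Alpha a ≠ 0 := by
    intro a h
    have hinj : ∀ b b', lam a b = lam a b' → b = b' := by
      intro b b' hbb
      have h1 : mul' (inv' a) (mAdd p q g a (lam a b)) =
          mul' (inv' a) (mAdd p q g a (lam a b')) := by rw [hbb]
      rwa [← lam_apply, ← lam_apply, gop_inv_op_op hM, gop_inv_op_op hM] at h1
    have h2 : lam a ((1 : ZMod p), (0 : ZMod q)) = lam a 0 := by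
      rw [hlamP, lam_zero, h, zero_mul, zero_eq]
    have h3 := hinj _ _ h2
    rw [zero_eq, Prod.mk.injEq] at h3
    exact one_ne_zero h3.1
  -- lam fixes the second component
  have hlam_snd : ∀ a (x : ZMod p × ZMod q), (lam a x).2 = x.2 := by
    intro a x
    have ht1 : (lam a ((0 : ZMod p), (1 : ZMod q))).2 = 1 :=
      snd_t_eq_one hp hq hg (lam a) (lam_add a) (Alpha a) (hAlpha0 a) (hlamP a)
    have h0m : ((0 : ZMod p), x.2) =
        msmul p q g x.2.val ((0 : ZMod p), (1 : ZMod q)) := by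
      obtain ⟨F, hF1, hF2⟩ := msmul_t hq.one_lt hgq x.2.val (0 : ZMod p)
      rw [mul_zero] at hF2
      have hF0 : F = 0 := by
        rcases mul_eq_zero.mp hF2 with h | h
        · exact absurd h hgs1
        · exact h
      rw [hF1, hF0, ZMod.natCast_rightInverse]
    have hx : mAdd p q g (x.1, (0 : ZMod q)) ((0 : ZMod p), x.2) = x := by
      simp [mAdd]
    calc (lam a x).2
        = (lam a (mAdd p q g (x.1, 0) (0, x.2))).2 := by rw [hx]
    _ = (mAdd p q g (lam a (x.1, 0)) (lam a (0, x.2))).2 := by rw [lam_add]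
    _ = (lam a (x.1, 0)).2 + (lam a (0, x.2)).2 := rfl
    _ = (lam a ((0 : ZMod p), x.2)).2 := by rw [hlam_P a _ rfl, zero_add]
    _ = (msmul p q g x.2.val (lam a ((0 : ZMod p), (1 : ZMod q)))).2 := by
          rw [h0m, hmsmul_lam]
    _ = (x.2.val : ZMod q) * (lam a ((0 : ZMod p), (1 : ZMod q))).2 := msmul_snd _ _
    _ = x.2 := by rw [ht1, mul_one, ZMod.natCast_rightInverse]
  -- lam only depends on the second component
  have hlam_eq : ∀ a b : ZMod p × ZMod q, a.2 = b.2 → ∀ y, lam a y = lam b y := by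
    intro a b hab y
    set k := mAdd p q g b (mNeg p q g a) with hk
    have hk2 : k.2 = 0 := by
      show b.2 + -a.2 = 0
      rw [hab]; ring
    have hkK : k ∈ Kset := hPK k hk2
    have hb : mAdd p q g k a = b := by
      rw [hk, hA.1, hA.2.2.2.1, hA.2.2.1]
    have hbmul : mul' k a = b := by rw [hkK a]; exact hb
    rw [← hbmul, lam_mul, lam_id_K k hkK]
  -- powers of t
  set t : ZMod p × ZMod q := ((0 : ZMod p), (1 : ZMod q)) with htdef
  set tp : ℕ → ZMod p × ZMod q := fun k => Nat.rec (0 : ZMod p × ZMod q)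
    (fun _ x => mul' t x) k with htp
  have htp0 : tp 0 = 0 := rfl
  have htps : ∀ k, tp (k + 1) = mul' t (tp k) := fun k => rfl
  have hmulsnd : ∀ a b : ZMod p × ZMod q, (mul' a b).2 = a.2 + b.2 := by
    intro a b
    rw [lam_apply]
    show a.2 + (lam a b).2 = a.2 + b.2
    rw [hlam_snd]
  have htp2 : ∀ k, (tp k).2 = (k : ZMod q) := by
    intro k
    induction k with
    | zero => rw [htp0]; simp
    | succ n ih => rw [htps, hmulsnd, ih]; show (1 : ZMod q) + n = _; push_cast; ring
  have hlam_tp : ∀ k y, lam (tp k) y = (lam t)^[k] y := by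
    intro k
    induction k with
    | zero => intro y; rw [htp0, Function.iterate_zero_apply]; exact lam_id_K 0 hK0 y
    | succ n ih =>
      intro y
      rw [htps, lam_mul, ih, Function.iterate_succ_apply']
  have hlam_a : ∀ a y, lam a y = (lam t)^[a.2.val] y := by
    intro a y
    rw [← hlam_tp]
    apply hlam_eq
    rw [htp2, ZMod.natCast_rightInverse]
  -- explicit form of lam t
  set α : ZMod p := Alpha t with hαdef
  set c₁ : ZMod p := (lam t t).1 with hc₁
  set w : ZMod p := c₁ * (g - 1)⁻¹ with hwdef
  have hw : (g - 1) * w = c₁ := by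
    rw [hwdef]; field_simp
  have hlamtt : lam t t = (c₁, 1) := Prod.ext rfl (by rw [hlam_snd])
  have hlamt0m : ∀ m : ZMod q, lam t ((0 : ZMod p), m) = ((g ^ m.val - 1) * w, m) := by
    intro m
    obtain ⟨F, hF1, hF2⟩ := msmul_t hq.one_lt hgq m.val (0 : ZMod p)
    rw [mul_zero] at hF2
    have hF0 : F = 0 := by
      rcases mul_eq_zero.mp hF2 with h | h
      · exact absurd h hgs1
      · exact h
    have h0m : ((0 : ZMod p), m) = msmul p q g m.val t := by
      rw [hF1, hF0, ZMod.natCast_rightInverse]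
    obtain ⟨F', hF'1, hF'2⟩ := msmul_t hq.one_lt hgq m.val c₁
    have hF'w : F' = (g ^ m.val - 1) * w := by
      apply mul_left_cancel₀ hgs1
      rw [hF'2]
      linear_combination (-(g ^ m.val - 1)) * hw
    rw [h0m, hmsmul_lam, hlamtt, hF'1, hF'w, ZMod.natCast_rightInverse]
  have hlamt : ∀ x : ZMod p × ZMod q,
      lam t x = (α * x.1 + (g ^ x.2.val - 1) * w, x.2) := by
    intro x
    have hx : mAdd p q g (x.1, (0 : ZMod q)) ((0 : ZMod p), x.2) = x := by simp [mAdd]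
    rw [← hx, lam_add, hlamP, hlamt0m]
    simp only [mAdd, ZMod.val_zero, pow_zero, one_mul, mul_zero, add_zero, zero_add, ← hαdef]
  -- the geometric series
  set Tk : ℕ → ZMod p := fun k => Nat.rec (0 : ZMod p) (fun _ T => α * T + 1) k with hTkdef
  have hTk0 : Tk 0 = 0 := rfl
  have hTks : ∀ k, Tk (k + 1) = α * Tk k + 1 := fun k => rfl
  have hTk : ∀ k, (α - 1) * Tk k = α ^ k - 1 := by
    intro k
    induction k with
    | zero => rw [hTk0]; ring
    | succ n ih => rw [hTks, pow_succ]; linear_combination α * ih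
  have hiter : ∀ (k : ℕ) (x : ZMod p × ZMod q),
      (lam t)^[k] x = (α ^ k * x.1 + (g ^ x.2.val - 1) * (Tk k * w), x.2) := by
    intro k
    induction k with
    | zero =>
      intro x
      rw [Function.iterate_zero_apply, hTk0]
      exact Prod.ext (by ring_nf) rfl
    | succ n ih =>
      intro x
      rw [Function.iterate_succ_apply', ih, hlamt]
      simp only
      refine Prod.ext ?_ rfl
      simp only
      rw [hTks, pow_succ]
      ring
  -- α is a nontrivial q-th root of unity
  have hidq : ∀ y, (lam t)^[q] y = y := by
    intro y
    rw [← hlam_tp]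
    apply lam_id_K
    apply hPK
    rw [htp2, ZMod.natCast_self]
  have hαq : α ^ q = 1 := by
    have h1 := hidq ((1 : ZMod p), (0 : ZMod q))
    rw [hiter] at h1
    have h2 := congrArg Prod.fst h1
    simp only [ZMod.val_zero, pow_zero] at h2
    linear_combination h2
  have hα1 : α ≠ 1 := by
    intro hcontra
    have hTk1 : ∀ k, Tk k = (k : ZMod p) := by
      intro k
      induction k with
      | zero => rw [hTk0]; simp
      | succ n ih => rw [hTks, ih, hcontra]; push_cast; ring
    have h1 := hidq t
    rw [hiter] at h1
    have h2 := congrArg Prod.fst h1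
    simp only [htdef, hval1, pow_one, mul_zero, zero_add] at h2
    rw [hTk1] at h2
    have hq0 : ((q : ℕ) : ZMod p) ≠ 0 := by
      intro h
      have := (ZMod.natCast_eq_zero_iff q p).mp h
      have := Nat.le_of_dvd hq.pos this
      omega
    have hw0 : w = 0 := by
      have h3 : (g - 1) * ((q : ZMod p) * w) = 0 := by linear_combination h2
      rcases mul_eq_zero.mp h3 with h | h
      · exact absurd h hgs1
      · rcases mul_eq_zero.mp h with h' | h'
        · exact absurd h' hq0
        · exact h'
    have hlamtid : ∀ y, lam t y = y := by
      intro y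
      rw [hlamt, hcontra, hw0]
      exact Prod.ext (by ring_nf) rfl
    have htK : t ∈ Kset := (hKiff t).mpr hlamtid
    have := hKP t htK
    rw [htdef] at this
    exact one_ne_zero this
  have hαs1 : α - 1 ≠ 0 := sub_ne_zero_of_ne hα1
  -- α = g ^ i
  obtain ⟨i, hiq, hαg⟩ := exists_pow_eq hp hq hg hαq
  have hi0 : i ≠ 0 := by
    intro h; rw [h, pow_zero] at hαg; exact hα1 hαg
  refine ⟨i + 1, by omega, by omega, -(w * (α - 1)⁻¹), ?_⟩
  have hd : (α - 1) * (-(w * (α - 1)⁻¹)) = -w := by field_simp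
  set d : ZMod p := -(w * (α - 1)⁻¹) with hddef
  intro a b
  have hmul : mul' a b = (a.1 + g ^ a.2.val *
      (α ^ a.2.val * b.1 + (g ^ b.2.val - 1) * (Tk a.2.val * w)), a.2 + b.2) := by
    rw [lam_apply, hlam_a, hiter]
    rfl
  have hGH : g ^ (a.2 + b.2).val = g ^ a.2.val * g ^ b.2.val := pow_val_add hgq a.2 b.2
  have hγv : g ^ ((i + 1) * a.2.val) = g ^ a.2.val * α ^ a.2.val := by
    rw [hαg, ← pow_mul, ← pow_add]
    congr 1
    ring
  have hT := hTk a.2.val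
  simp only [conjE, gMul, Equiv.coe_fn_mk, hmul, Prod.mk.injEq]
  refine ⟨?_, trivial⟩
  rw [hGH, hγv]
  linear_combination (g ^ a.2.val * (g ^ b.2.val - 1) * Tk a.2.val) * hd -
    (g ^ a.2.val * (g ^ b.2.val - 1) * d) * hT
lemma part3 (hp : p.Prime) (hq : q.Prime) (hlt : q < p) (hmod : p % q = 1)
    (hg : orderOf g = q) (A : Type) (add : A → A → A) (zero : A) (neg : A → A)
    (mul : A → A → A) (one : A) (inv : A → A)
    (hSB : IsSkewBrace add zero neg mul one inv)
    (e0 : A ≃ ZMod p × ZMod q) (he0 : ∀ a b, e0 (add a b) = mAdd p q g (e0 a) (e0 b))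
    (hcard : Nat.card {a : A | ∀ b, mul a b = add a b} = p) :
    ∃ γ : ℕ, 1 < γ ∧ γ ≤ q ∧ ∃ e : A ≃ ZMod p × ZMod q,
      (∀ a b, e (add a b) = mAdd p q g (e a) (e b)) ∧
      (∀ a b, e (mul a b) = gMul p q g γ (e a) (e b)) := by
  haveI : NeZero q := ⟨hq.ne_zero⟩
  haveI : NeZero p := ⟨hp.ne_zero⟩
  have hgq : g ^ q = 1 := by rw [← hg]; exact pow_orderOf_eq_one g
  have hA : IsGroupOp (mAdd p q g) 0 (mNeg p q g) := isGroupOp_mAdd hgq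
  have hone : one = zero := sb_one_eq_zero hSB
  set mul' : (ZMod p × ZMod q) → (ZMod p × ZMod q) → (ZMod p × ZMod q) :=
    fun x y => e0 (mul (e0.symm x) (e0.symm y)) with hmul'
  set inv' : (ZMod p × ZMod q) → (ZMod p × ZMod q) :=
    fun x => e0 (inv (e0.symm x)) with hinv'
  have he0zero : e0 zero = 0 := hom_id hSB.1 hA e0 he0
  have hsymm0 : e0.symm 0 = zero := by
    rw [← he0zero, Equiv.symm_apply_apply]
  have hsymm_add : ∀ x y, e0.symm (mAdd p q g x y) = add (e0.symm x) (e0.symm y) := by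
    intro x y
    apply e0.injective
    rw [he0, Equiv.apply_symm_apply, Equiv.apply_symm_apply, Equiv.apply_symm_apply]
  have hM : IsGroupOp mul' 0 inv' := by
    obtain ⟨ha, hl, hr, hil, hir⟩ := hSB.2.1
    refine ⟨?_, ?_, ?_, ?_, ?_⟩
    · intro a b c
      simp only [hmul', Equiv.symm_apply_apply]
      exact congrArg e0 (ha _ _ _)
    · intro a
      simp only [hmul', hsymm0, ← hone]
      rw [hl, Equiv.apply_symm_apply]
    · intro a
      simp only [hmul', hsymm0, ← hone]
      rw [hr, Equiv.apply_symm_apply]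
    · intro a
      simp only [hmul', hinv', Equiv.symm_apply_apply]
      rw [hil, hone, he0zero]
    · intro a
      simp only [hmul', hinv', Equiv.symm_apply_apply]
      rw [hir, hone, he0zero]
  have hbr : ∀ a b c, mul' a (mAdd p q g b c) =
      mAdd p q g (mAdd p q g (mul' a b) (mNeg p q g a)) (mul' a c) := by
    intro a b c
    have hnegs : e0 (neg (e0.symm a)) = mNeg p q g a := by
      have h1 := hom_inv hSB.1 hA e0 he0 (e0.symm a)
      rw [Equiv.apply_symm_apply] at h1
      exact h1
    calc mul' a (mAdd p q g b c)
        = e0 (mul (e0.symm a) (add (e0.symm b) (e0.symm c))) := by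
          simp only [hmul']; rw [hsymm_add]
    _ = e0 (add (add (mul (e0.symm a) (e0.symm b)) (neg (e0.symm a)))
          (mul (e0.symm a) (e0.symm c))) := by rw [hSB.2.2]
    _ = mAdd p q g (mAdd p q g (e0 (mul (e0.symm a) (e0.symm b))) (e0 (neg (e0.symm a))))
          (e0 (mul (e0.symm a) (e0.symm c))) := by rw [he0, he0]
    _ = mAdd p q g (mAdd p q g (mul' a b) (mNeg p q g a)) (mul' a c) := by
          rw [hnegs]
  have hiff : ∀ a : A, (∀ b, mul a b = add a b) ↔
      (∀ y, mul' (e0 a) y = mAdd p q g (e0 a) y) := by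
    intro a
    constructor
    · intro h y
      simp only [hmul', Equiv.symm_apply_apply]
      rw [h, he0, Equiv.apply_symm_apply]
    · intro h b
      apply e0.injective
      have h1 := h (e0 b)
      simp only [hmul', Equiv.symm_apply_apply] at h1
      rw [h1, he0]
  have hcard' : Nat.card {x : ZMod p × ZMod q | ∀ y, mul' x y = mAdd p q g x y} = p := by
    calc Nat.card {x : ZMod p × ZMod q | ∀ y, mul' x y = mAdd p q g x y}
        = Nat.card {a : A | ∀ b, mul a b = add a b} :=
          (Nat.card_congr (Equiv.subtypeEquiv e0 hiff)).symm
    _ = p := hcard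
  obtain ⟨γ, hγ1, hγq, d, hconj⟩ := main3 hp hq hlt hmod hg mul' inv' hM hbr hcard'
  refine ⟨γ, hγ1, hγq, e0.trans (conjE p q g d), ?_, ?_⟩
  · intro a b
    simp only [Equiv.trans_apply]
    rw [he0, conjE_add hgq]
  · intro a b
    simp only [Equiv.trans_apply]
    have h2 : e0 (mul a b) = mul' (e0 a) (e0 b) := by
      simp only [hmul', Equiv.symm_apply_apply]
    rw [h2, hconj]

end St18

/-- Let `p > q` be primes with `p ≡ 1 (mod q)` and `g` of order `q` mod `p`.  For each
`1 < γ ≤ q`, the operations `(n,m) + (s,t) = (n + g^m s, m+t)` and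
`(n,m) ∘ (s,t) = (n + g^{γm} s, m+t)` make `A_γ = (ℤ_p × ℤ_q, +, ∘)` a bi-skew brace
with additive group `ℤ_p ⋊_g ℤ_q` and `|ker λ| = p`; distinct values of `γ` give
non-isomorphic braces, and every skew brace with additive group `ℤ_p ⋊_g ℤ_q` and
`|ker λ| = p` is isomorphic to some `A_γ`: there are exactly `q - 1` isomorphism
classes. -/
theorem stmt18 (p q : ℕ) (hp : p.Prime) (hq : q.Prime) (hlt : q < p)
    (hmod : p % q = 1) (g : ZMod p) (hg : orderOf g = q) :
    (∀ γ : ℕ, 1 < γ → γ ≤ q →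
      IsSkewBrace (mAdd p q g) 0 (mNeg p q g) (gMul p q g γ) 0 (gInv p q g γ) ∧
      IsSkewBrace (gMul p q g γ) 0 (gInv p q g γ) (mAdd p q g) 0 (mNeg p q g) ∧
      Nat.card {a : ZMod p × ZMod q | ∀ b, gMul p q g γ a b = mAdd p q g a b} = p) ∧
    (∀ γ γ' : ℕ, 1 < γ → γ ≤ q → 1 < γ' → γ' ≤ q → γ ≠ γ' →
      ¬∃ e : (ZMod p × ZMod q) ≃ (ZMod p × ZMod q),
        (∀ a b, e (mAdd p q g a b) = mAdd p q g (e a) (e b)) ∧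
        (∀ a b, e (gMul p q g γ a b) = gMul p q g γ' (e a) (e b))) ∧
    (∀ (A : Type) (add : A → A → A) (zero : A) (neg : A → A)
        (mul : A → A → A) (one : A) (inv : A → A),
      IsSkewBrace add zero neg mul one inv →
      (∃ e : A ≃ ZMod p × ZMod q, ∀ a b, e (add a b) = mAdd p q g (e a) (e b)) →
      Nat.card {a : A | ∀ b, mul a b = add a b} = p →
      ∃ γ : ℕ, 1 < γ ∧ γ ≤ q ∧
        ∃ e : A ≃ ZMod p × ZMod q,
          (∀ a b, e (add a b) = mAdd p q g (e a) (e b)) ∧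
          (∀ a b, e (mul a b) = gMul p q g γ (e a) (e b))) := by
  refine ⟨fun γ h1 h2 => St18.part1 hp hq hg γ h1 h2, ?_, ?_⟩
  · intro γ γ' hγ1 hγq hγ'1 hγ'q hne h
    obtain ⟨e, hadd, hmul⟩ := h
    exact St18.part2 hp hq hlt hg γ γ' hγ1 hγq hγ'1 hγ'q hne e hadd hmul
  · intro A add zero neg mul one inv hSB he hcard
    obtain ⟨e0, he0⟩ := he
    exact St18.part3 hp hq hlt hmod hg A add zero neg mul one inv hSB e0 he0 hcard
end

section
/- Let p > q be primes with p ≡ 1 (mod q) and g of order q mod p. For each μ with 1 < μ ≤ q, define on A = ℤ_p × ℤ_q the operations (n,m) + (s,t) = (n + g^m s, m+t) and (n,m) ∘ (s,t) = (g^t n + g^{μm} s, m+t). Then each A_μ = (A,+,∘) is a skew brace with additive group ℤ_p ⋊_g ℤ_q whose λ map is injective (ker λ = 0), and these give exactly q-1 isomorphism classes of such skew braces. -/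
section

variable (p q : ℕ) (g : ZMod p)

/-- The circle operation `(n,m) ∘ (s,t) = (g^t n + g^{μm} s, m+t)` of `A_μ`. -/
def muMul (μ : ℕ) (x y : ZMod p × ZMod q) : ZMod p × ZMod q :=
  (g ^ y.2.val * x.1 + g ^ (μ * x.2.val) * y.1, x.2 + y.2)

/-- The inverse for the circle operation of `A_μ`. -/
def muInv (μ : ℕ) (x : ZMod p × ZMod q) : ZMod p × ZMod q :=
  (-(g ^ ((μ + 1) * (q - x.2.val)) * x.1), -x.2)

/-- The lambda map `λ_a(b) = -a + (a ∘ b)` of `A_μ`. -/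
def muLam (μ : ℕ) (a : ZMod p × ZMod q) : ZMod p × ZMod q → ZMod p × ZMod q :=
  fun b => mAdd p q g (mNeg p q g a) (muMul p q g μ a b)

end

namespace Stmt19

/-! ### Generic group-operation lemmas -/

theorem op_left_cancel {A : Type*} {op : A → A → A} {e : A} {inv : A → A}
    (h : IsGroupOp op e inv) {a b c : A} (hbc : op a b = op a c) : b = c := by
  have := congrArg (op (inv a)) hbc
  rwa [← h.1, ← h.1, h.2.2.2.1, h.2.1, h.2.1] at this

theorem op_idem_eq {A : Type*} {op : A → A → A} {e : A} {inv : A → A}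
    (h : IsGroupOp op e inv) {a : A} (ha : op a a = a) : a = e :=
  op_left_cancel h (a := a) (by rw [ha, h.2.2.1])

theorem op_inv_eq {A : Type*} {op : A → A → A} {e : A} {inv : A → A}
    (h : IsGroupOp op e inv) {a b : A} (hab : op a b = e) : b = inv a := by
  have := congrArg (op (inv a)) hab
  rwa [← h.1, h.2.2.2.1, h.2.1, h.2.2.1] at this

/-! ### Context -/

structure Ctx (p q : ℕ) (g : ZMod p) : Prop where
  hp : p.Prime
  hq : q.Prime
  hlt : q < p
  hmod : p % q = 1
  hg : orderOf g = q

variable {p q : ℕ} {g : ZMod p}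

namespace Ctx

theorem nzq (C : Ctx p q g) : NeZero q := ⟨C.hq.pos.ne'⟩
theorem nzp (C : Ctx p q g) : NeZero p := ⟨C.hp.pos.ne'⟩
theorem q2 (C : Ctx p q g) : 2 ≤ q := C.hq.two_le
theorem factp (C : Ctx p q g) : Fact p.Prime := ⟨C.hp⟩
theorem factq (C : Ctx p q g) : Fact q.Prime := ⟨C.hq⟩

theorem gq (C : Ctx p q g) : g ^ q = 1 := by rw [← C.hg]; exact pow_orderOf_eq_one g

theorem gne1 (C : Ctx p q g) : g ≠ 1 := by
  intro h
  have h2 := C.q2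
  have := C.hg
  rw [h, orderOf_one] at this
  omega

theorem gne0 (C : Ctx p q g) : g ≠ 0 := by
  intro h
  have h1 : g ^ q = 1 := C.gq
  rw [h, zero_pow C.hq.pos.ne'] at h1
  haveI : Fact p.Prime := C.factp
  exact zero_ne_one h1

theorem gsub1 (C : Ctx p q g) : g - 1 ≠ 0 := sub_ne_zero.mpr C.gne1

end Ctx

/-- `g` as a unit. -/
noncomputable def Ctx.gu (C : Ctx p q g) : (ZMod p)ˣ :=
  haveI : Fact p.Prime := C.factp
  (Ne.isUnit C.gne0).unit

theorem Ctx.gu_val (C : Ctx p q g) : (C.gu : ZMod p) = g := rfl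

theorem Ctx.gu_order (C : Ctx p q g) : orderOf C.gu = q := by
  rw [← orderOf_units, C.gu_val, C.hg]

/-- the main congruence tool: exponents of `g` matter only mod `q`. -/
theorem Ctx.pow_eqc (C : Ctx p q g) {a b : ℕ} (h : (a : ZMod q) = (b : ZMod q)) :
    g ^ a = g ^ b := by
  have : C.gu ^ a = C.gu ^ b := by
    rw [pow_eq_pow_iff_modEq, C.gu_order]
    exact (ZMod.natCast_eq_natCast_iff _ _ _).mp h
  have := congrArg (Units.val) this
  simpa [C.gu_val] using this

theorem Ctx.pow_inj (C : Ctx p q g) {a b : ℕ} (h : g ^ a = g ^ b) :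
    (a : ZMod q) = (b : ZMod q) := by
  apply (ZMod.natCast_eq_natCast_iff _ _ _).mpr
  rw [← C.gu_order, ← pow_eq_pow_iff_modEq]
  exact Units.ext (by simpa [C.gu_val] using h)

/-! ### the power function `gp` -/

/-- `gp m = g ^ m` for `m : ZMod q`. -/
def gp (q : ℕ) (g : ZMod p) (m : ZMod q) : ZMod p := g ^ m.val

section gp

variable (C : Ctx p q g)
include C

theorem gp_natCast (n : ℕ) : gp q g (n : ZMod q) = g ^ n := by
  haveI := C.nzq
  exact C.pow_eqc (by simp [ZMod.natCast_val, ZMod.cast_id])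

omit C in
theorem gp_val (m : ZMod q) : gp q g m = g ^ m.val := rfl

theorem gp_zero : gp q g 0 = 1 := by
  haveI := C.nzq
  rw [gp, ZMod.val_zero, pow_zero]

theorem gp_one : gp q g 1 = g := by
  have h : gp q g ((1 : ℕ) : ZMod q) = g ^ 1 := gp_natCast C 1
  rwa [Nat.cast_one, pow_one] at h

theorem gp_add (m n : ZMod q) : gp q g (m + n) = gp q g m * gp q g n := by
  haveI := C.nzq
  rw [gp, gp, gp, ← pow_add]
  exact C.pow_eqc (by push_cast [ZMod.natCast_val, ZMod.cast_id]; ring)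

theorem gp_neg_cancel (m : ZMod q) : gp q g (-m) * gp q g m = 1 := by
  rw [← gp_add C, neg_add_cancel, gp_zero C]

theorem gp_ne_zero (m : ZMod q) : gp q g m ≠ 0 := by
  haveI := C.factp
  exact pow_ne_zero _ C.gne0

theorem gp_inj {m n : ZMod q} (h : gp q g m = gp q g n) : m = n := by
  haveI := C.nzq
  have := C.pow_inj h
  rwa [ZMod.natCast_val, ZMod.natCast_val, ZMod.cast_id, ZMod.cast_id] at this

theorem gp_pow (k : ℕ) (m : ZMod q) : gp q g m ^ k = gp q g ((k : ZMod q) * m) := by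
  haveI := C.nzq
  rw [gp, gp, ← pow_mul]
  exact C.pow_eqc (by push_cast [ZMod.natCast_val, ZMod.cast_id]; ring)

end gp

end Stmt19
namespace Stmt19

variable {p q : ℕ} {g : ZMod p}

/-- partial geometric sums of `g`. -/
def SS (g : ZMod p) (n : ℕ) : ZMod p := ∑ i ∈ Finset.range n, g ^ i

theorem SS_zero : SS g 0 = 0 := by simp [SS]

theorem SS_one : SS g 1 = 1 := by simp [SS]

theorem SS_succ (n : ℕ) : SS g (n + 1) = SS g n + g ^ n := by
  simp [SS, Finset.sum_range_succ]

theorem SS_mul (n : ℕ) : (g - 1) * SS g n = g ^ n - 1 := by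
  rw [SS, mul_comm, geom_sum_mul]

theorem SS_add (a b : ℕ) : SS g (a + b) = SS g a + g ^ a * SS g b := by
  induction b with
  | zero => simp [SS_zero]
  | succ b ih => rw [← Nat.add_assoc, SS_succ, ih, SS_succ, pow_add]; ring

section

variable (C : Ctx p q g)
include C

theorem SS_q : SS g q = 0 := by
  haveI := C.factp
  have h := SS_mul (g := g) q
  rw [C.gq, sub_self] at h
  rcases mul_eq_zero.mp h with h' | h'
  · exact absurd h' C.gsub1
  · exact h'
  
theorem SS_congr (n : ℕ) : SS g n = SS g (n % q) := by
  conv_lhs => rw [← Nat.mod_add_div n q]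
  generalize n / q = k
  induction k with
  | zero => simp
  | succ k ih =>
      rw [Nat.mul_succ, ← Nat.add_assoc, SS_add, SS_q C, mul_zero, add_zero, ih]

end

/-- geometric sum as a function of `ZMod q`. -/
def Sm (q : ℕ) (g : ZMod p) (m : ZMod q) : ZMod p := SS g m.val

section Sm

variable (C : Ctx p q g)
include C

theorem Sm_natCast (n : ℕ) : Sm q g (n : ZMod q) = SS g n := by
  haveI := C.nzq
  rw [Sm, ZMod.val_natCast, ← SS_congr C]

theorem Sm_zero : Sm q g 0 = 0 := by
  haveI := C.nzq
  rw [Sm, ZMod.val_zero, SS_zero]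

theorem Sm_one : Sm q g 1 = 1 := by
  have h := Sm_natCast C 1
  rwa [Nat.cast_one, SS_one] at h

theorem Sm_mul (m : ZMod q) : (g - 1) * Sm q g m = gp q g m - 1 := by
  rw [Sm, SS_mul]; rfl

theorem Sm_add (m n : ZMod q) : Sm q g (m + n) = Sm q g m + gp q g m * Sm q g n := by
  haveI := C.nzq
  have h1 : Sm q g (m + n) = SS g (m.val + n.val) := by
    have : ((m.val + n.val : ℕ) : ZMod q) = m + n := by
      push_cast [ZMod.natCast_val, ZMod.cast_id]; ring
    rw [← this, Sm_natCast C]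
  rw [h1, SS_add]; rfl

theorem Sm_sym (m n : ZMod q) :
    Sm q g m * (1 - gp q g n) = Sm q g n * (1 - gp q g m) := by
  haveI := C.factp
  apply mul_left_cancel₀ C.gsub1
  rw [← mul_assoc, ← mul_assoc, Sm_mul C, Sm_mul C]
  ring

end Sm

end Stmt19
namespace Stmt19

variable {p q : ℕ} {g : ZMod p}

section ops

variable (C : Ctx p q g)
include C

omit C in
theorem mAdd_eq (x y : ZMod p × ZMod q) :
    mAdd p q g x y = (x.1 + gp q g x.2 * y.1, x.2 + y.2) := rfl

theorem mNeg_eq (x : ZMod p × ZMod q) :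
    mNeg p q g x = (-(gp q g (-x.2) * x.1), -x.2) := by
  haveI := C.nzq
  have h : g ^ (q - x.2.val) = gp q g (-x.2) := by
    rw [gp]
    apply C.pow_eqc
    have hv : x.2.val ≤ q := le_of_lt (ZMod.val_lt x.2)
    push_cast [Nat.cast_sub hv, ZMod.natCast_val, ZMod.cast_id, ZMod.natCast_self]
    ring
  rw [mNeg, h]

theorem muMul_eq (μ : ℕ) (x y : ZMod p × ZMod q) :
    muMul p q g μ x y =
      (gp q g y.2 * x.1 + gp q g ((μ : ZMod q) * x.2) * y.1, x.2 + y.2) := by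
  haveI := C.nzq
  have h : g ^ (μ * x.2.val) = gp q g ((μ : ZMod q) * x.2) := by
    rw [gp]; apply C.pow_eqc
    push_cast [ZMod.natCast_val, ZMod.cast_id]; ring
  rw [muMul, h]; rfl

theorem muInv_eq (μ : ℕ) (x : ZMod p × ZMod q) :
    muInv p q g μ x = (-(gp q g (-(((μ : ZMod q) + 1) * x.2)) * x.1), -x.2) := by
  haveI := C.nzq
  have h : g ^ ((μ + 1) * (q - x.2.val)) = gp q g (-(((μ : ZMod q) + 1) * x.2)) := by
    rw [gp]; apply C.pow_eqc
    have hv : x.2.val ≤ q := le_of_lt (ZMod.val_lt x.2)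
    push_cast [Nat.cast_sub hv, ZMod.natCast_val, ZMod.cast_id, ZMod.natCast_self]
    ring
  rw [muInv, h]

omit C in
theorem zero_pair : (0 : ZMod p × ZMod q) = ((0 : ZMod p), (0 : ZMod q)) := rfl

theorem mAdd_group : IsGroupOp (mAdd p q g) 0 (mNeg p q g) := by
  refine ⟨?_, ?_, ?_, ?_, ?_⟩
  · intro a b c
    apply Prod.ext
    · simp only [mAdd_eq, gp_add C]; ring
    · simp only [mAdd_eq]; exact add_assoc _ _ _
  · intro a
    apply Prod.ext
    · simp only [mAdd_eq, zero_pair, gp_zero C]; ring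
    · simp only [mAdd_eq, zero_pair]; exact zero_add _
  · intro a
    apply Prod.ext
    · simp only [mAdd_eq, zero_pair]; ring
    · simp only [mAdd_eq, zero_pair]; exact add_zero _
  · intro a
    apply Prod.ext
    · simp only [mAdd_eq, mNeg_eq C, zero_pair]; ring
    · simp only [mAdd_eq, mNeg_eq C, zero_pair]; exact neg_add_cancel _
  · intro a
    apply Prod.ext
    · simp only [mAdd_eq, mNeg_eq C, zero_pair]
      have := gp_neg_cancel C a.2
      calc a.1 + gp q g a.2 * -(gp q g (-a.2) * a.1)
          = a.1 - (gp q g a.2 * gp q g (-a.2)) * a.1 := by ring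
        _ = 0 := by rw [mul_comm (gp q g a.2), this]; ring
    · simp only [mAdd_eq, mNeg_eq C, zero_pair]; exact add_neg_cancel _

theorem muMul_group (μ : ℕ) : IsGroupOp (muMul p q g μ) 0 (muInv p q g μ) := by
  have hmul : ∀ a b : ZMod q, gp q g ((μ : ZMod q) * (a + b)) =
      gp q g ((μ : ZMod q) * a) * gp q g ((μ : ZMod q) * b) := by
    intro a b; rw [mul_add, gp_add C]
  refine ⟨?_, ?_, ?_, ?_, ?_⟩
  · intro a b c
    apply Prod.ext
    · simp only [muMul_eq C, hmul, gp_add C]; ring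
    · simp only [muMul_eq C]; exact add_assoc _ _ _
  · intro a
    apply Prod.ext
    · simp only [muMul_eq C, zero_pair, mul_zero, gp_zero C]; ring
    · simp only [muMul_eq C, zero_pair]; exact zero_add _
  · intro a
    apply Prod.ext
    · simp only [muMul_eq C, zero_pair, gp_zero C]; ring
    · simp only [muMul_eq C, zero_pair]; exact add_zero _
  · intro a
    apply Prod.ext
    · simp only [muMul_eq C, muInv_eq C, zero_pair]
      have h1 : gp q g a.2 * gp q g (-(((μ:ZMod q)+1) * a.2)) =
          gp q g (-((μ:ZMod q) * a.2)) := by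
        rw [← gp_add C]; congr 1; ring
      have h2 : gp q g ((μ:ZMod q) * -a.2) = gp q g (-((μ:ZMod q) * a.2)) := by
        congr 1; ring
      calc gp q g a.2 * -(gp q g (-(((μ:ZMod q)+1) * a.2)) * a.1) +
            gp q g ((μ:ZMod q) * -a.2) * a.1
          = -((gp q g a.2 * gp q g (-(((μ:ZMod q)+1) * a.2))) * a.1) +
            gp q g ((μ:ZMod q) * -a.2) * a.1 := by ring
        _ = 0 := by rw [h1, h2]; ring
    · simp only [muMul_eq C, muInv_eq C, zero_pair]; exact neg_add_cancel _
  · intro a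
    apply Prod.ext
    · simp only [muMul_eq C, muInv_eq C, zero_pair]
      have h1 : gp q g ((μ:ZMod q) * a.2) * gp q g (-(((μ:ZMod q)+1) * a.2)) =
          gp q g (-a.2) := by
        rw [← gp_add C]; congr 1; ring
      calc gp q g (-a.2) * a.1 +
            gp q g ((μ:ZMod q) * a.2) * -(gp q g (-(((μ:ZMod q)+1) * a.2)) * a.1)
          = gp q g (-a.2) * a.1 -
            (gp q g ((μ:ZMod q) * a.2) * gp q g (-(((μ:ZMod q)+1) * a.2))) * a.1 := by
            ring
        _ = 0 := by rw [h1]; ring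
    · simp only [muMul_eq C, muInv_eq C, zero_pair]; exact add_neg_cancel _

theorem brace_law (μ : ℕ) : ∀ a b c,
    muMul p q g μ a (mAdd p q g b c) =
      mAdd p q g (mAdd p q g (muMul p q g μ a b) (mNeg p q g a)) (muMul p q g μ a c) := by
  intro a b c
  apply Prod.ext
  · simp only [muMul_eq C, mAdd_eq, mNeg_eq C, gp_add C]
    have h := gp_neg_cancel C a.2
    linear_combination (gp q g b.2 * a.1 - gp q g b.2 * gp q g c.2 * a.1 -
      gp q g b.2 * gp q g ((μ : ZMod q) * a.2) * c.1) * h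
  · simp only [muMul_eq C, mAdd_eq, mNeg_eq C]; ring

theorem muLam_eq (μ : ℕ) (a b : ZMod p × ZMod q) :
    muLam p q g μ a b =
      (gp q g (-a.2) * a.1 * (gp q g b.2 - 1) +
        gp q g (((μ : ZMod q) - 1) * a.2) * b.1, b.2) := by
  have h1 : gp q g (-a.2) * gp q g ((μ:ZMod q) * a.2) =
      gp q g (((μ:ZMod q) - 1) * a.2) := by rw [← gp_add C]; congr 1; ring
  apply Prod.ext
  · simp only [muLam, mAdd_eq, mNeg_eq C, muMul_eq C]
    rw [← h1]; ring
  · simp only [muLam, mAdd_eq, mNeg_eq C, muMul_eq C]; ring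

theorem muLam_inj (μ : ℕ) (hμ1 : 1 < μ) (hμ2 : μ ≤ q) :
    Function.Injective (muLam p q g μ) := by
  haveI := C.factp
  haveI := C.factq
  haveI := C.nzq
  have hμq : ((μ : ZMod q) - 1) ≠ 0 := by
    intro h
    have h1 : ((μ - 1 : ℕ) : ZMod q) = 0 := by
      push_cast [Nat.cast_sub (le_of_lt hμ1)]
      simpa using h
    rw [ZMod.natCast_eq_zero_iff] at h1
    have := Nat.le_of_dvd (by omega) h1
    omega
  intro a a' h
  have h10 := congrFun h ((1 : ZMod p), (0 : ZMod q))
  have h01 := congrFun h ((0 : ZMod p), (1 : ZMod q))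
  rw [muLam_eq C, muLam_eq C] at h10 h01
  simp only [Prod.mk.injEq, gp_zero C] at h10 h01
  have ha2 : a.2 = a'.2 := by
    have := h10.1
    simp only [mul_one, sub_self, mul_zero, zero_add] at this
    have h2 := gp_inj C this
    exact mul_left_cancel₀ hμq h2
  have ha1 : a.1 = a'.1 := by
    have := h01.1
    simp only [mul_zero, add_zero, gp_one C] at this
    rw [ha2] at this
    have h3 := mul_right_cancel₀ C.gsub1 this
    exact mul_left_cancel₀ (gp_ne_zero C (-a'.2)) h3
  exact Prod.ext ha1 ha2

end ops

end Stmt19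
namespace Stmt19

variable {p q : ℕ} {g : ZMod p}

theorem mAdd_zero_zero : mAdd p q g 0 0 = 0 := by
  apply Prod.ext <;> simp [mAdd]

/-- Structure of additive endomorphisms of `M = ℤ_p ⋊ ℤ_q`:
every injective additive map has the form `(x, m) ↦ (a x + c S_m, m)`. -/
theorem autM (C : Ctx p q g) {f : ZMod p × ZMod q → ZMod p × ZMod q}
    (hadd : ∀ x y, f (mAdd p q g x y) = mAdd p q g (f x) (f y))
    (hinj : Function.Injective f) :
    ∃ a c : ZMod p, a ≠ 0 ∧ ∀ x, f x = (a * x.1 + c * Sm q g x.2, x.2) := by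
  haveI := C.nzq
  haveI := C.nzp
  haveI := C.factp
  have f0 : f 0 = 0 := by
    apply op_idem_eq (mAdd_group C)
    rw [← hadd, mAdd_zero_zero]
  set a := (f (1, 0)).1 with ha
  set d0 := (f (1, 0)).2 with hd0
  -- second coordinates on the p-part
  have step1 : ∀ n : ℕ, (f ((n : ZMod p), 0)).2 = (n : ZMod q) * d0 := by
    intro n
    induction n with
    | zero =>
        rw [Nat.cast_zero, show ((0:ZMod p), (0:ZMod q)) = (0 : ZMod p × ZMod q) from rfl, f0]
        simp
    | succ n ih =>
        have hpair : (((n+1 : ℕ) : ZMod p), (0 : ZMod q)) =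
            mAdd p q g ((n : ZMod p), 0) (1, 0) := by
          apply Prod.ext
          · show ((n+1 : ℕ) : ZMod p) = (n : ZMod p) + gp q g 0 * 1
            rw [gp_zero C]; push_cast; ring
          · show (0 : ZMod q) = 0 + 0; ring
        rw [hpair, hadd]
        show (f ((n : ZMod p), 0)).2 + d0 = _
        rw [ih]; push_cast; ring
  have hd0z : d0 = 0 := by
    have h1 := step1 p
    rw [ZMod.natCast_self] at h1
    have h2 : ((p : ℕ) : ZMod q) = 1 := by
      rw [← ZMod.natCast_mod, C.hmod, Nat.cast_one]
    rw [show ((0 : ZMod p), (0 : ZMod q)) = 0 from rfl, f0, h2] at h1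
    simpa using h1.symm
  -- first coordinates on the p-part
  have f10 : f (1, 0) = (a, 0) := by
    apply Prod.ext
    · rfl
    · exact hd0z
  have step2 : ∀ n : ℕ, f ((n : ZMod p), 0) = ((n : ZMod p) * a, 0) := by
    intro n
    induction n with
    | zero =>
        rw [Nat.cast_zero, show ((0:ZMod p), (0:ZMod q)) = (0 : ZMod p × ZMod q) from rfl, f0]
        simp
        rfl
    | succ n ih =>
        have hpair : (((n+1 : ℕ) : ZMod p), (0 : ZMod q)) =
            mAdd p q g ((n : ZMod p), 0) (1, 0) := by
          apply Prod.ext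
          · show ((n+1 : ℕ) : ZMod p) = (n : ZMod p) + gp q g 0 * 1
            rw [gp_zero C]; push_cast; ring
          · show (0 : ZMod q) = 0 + 0; ring
        rw [hpair, hadd, ih, f10]
        apply Prod.ext
        · show (n : ZMod p) * a + gp q g 0 * a = ((n+1 : ℕ) : ZMod p) * a
          rw [gp_zero C]; push_cast; ring
        · show (0 : ZMod q) + 0 = 0; ring
  have stepH : ∀ x : ZMod p, f (x, 0) = (a * x, 0) := by
    intro x
    have := step2 x.val
    rwa [ZMod.natCast_val, ZMod.cast_id, mul_comm] at this
  have hane : a ≠ 0 := by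
    intro h
    have : f (1, 0) = f 0 := by rw [f10, h, f0]; rfl
    have := hinj this
    have h1 : (1 : ZMod p) = 0 := congrArg Prod.fst this
    exact one_ne_zero h1
  set c := (f (0, 1)).1 with hc
  set d1 := (f (0, 1)).2 with hd1
  have f01 : f (0, 1) = (c, d1) := by apply Prod.ext <;> rfl
  -- d1 = 1
  have hd11 : d1 = 1 := by
    have hrel1 : mAdd p q g (0, 1) (1, 0) = ((g : ZMod p), (1 : ZMod q)) := by
      apply Prod.ext
      · show (0 : ZMod p) + gp q g 1 * 1 = g
        rw [gp_one C]; ring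
      · show (1 : ZMod q) + 0 = 1; ring
    have hrel2 : mAdd p q g ((g : ZMod p), 0) (0, 1) = ((g : ZMod p), (1 : ZMod q)) := by
      apply Prod.ext
      · show g + gp q g 0 * 0 = g
        ring
      · show (0 : ZMod q) + 1 = 1; ring
    have e1 := hadd (0, 1) (1, 0)
    rw [hrel1] at e1
    have e2 := hadd ((g : ZMod p), 0) (0, 1)
    rw [hrel2] at e2
    have e3 : mAdd p q g (f (0,1)) (f (1,0)) = mAdd p q g (f ((g : ZMod p), 0)) (f (0,1)) := by
      rw [← e1, ← e2]
    rw [f10, f01, stepH g] at e3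
    have e4 : c + gp q g d1 * a = a * g + gp q g 0 * c := congrArg Prod.fst e3
    rw [gp_zero C] at e4
    have e5 : gp q g d1 * a = g * a := by linear_combination e4
    have e6 : gp q g d1 = gp q g 1 := by
      rw [gp_one C]
      exact mul_right_cancel₀ hane e5
    exact gp_inj C e6
  have f01' : f (0, 1) = (c, 1) := by rw [f01, hd11]
  -- the q-part
  have step4 : ∀ n : ℕ, f (0, (n : ZMod q)) = (c * SS g n, (n : ZMod q)) := by
    intro n
    induction n with
    | zero =>
        rw [Nat.cast_zero, show ((0:ZMod p), (0:ZMod q)) = (0 : ZMod p × ZMod q) from rfl, f0]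
        simp [SS_zero]
        rfl
    | succ n ih =>
        have hpair : ((0 : ZMod p), ((n+1 : ℕ) : ZMod q)) =
            mAdd p q g (0, (n : ZMod q)) (0, 1) := by
          apply Prod.ext
          · show (0 : ZMod p) = 0 + gp q g (n : ZMod q) * 0; ring
          · show ((n+1 : ℕ) : ZMod q) = (n : ZMod q) + 1; push_cast; ring
        rw [hpair, hadd, ih, f01']
        apply Prod.ext
        · show c * SS g n + gp q g ((n : ZMod q)) * c = c * SS g (n+1)
          rw [gp_natCast C, SS_succ]; ring
        · show (n : ZMod q) + 1 = ((n+1 : ℕ) : ZMod q); push_cast; ring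
  have stepQ : ∀ m : ZMod q, f (0, m) = (c * Sm q g m, m) := by
    intro m
    have := step4 m.val
    rwa [ZMod.natCast_val, ZMod.cast_id, ← Sm] at this
  refine ⟨a, c, hane, fun x => ?_⟩
  have hpair : x = mAdd p q g (x.1, 0) (0, x.2) := by
    apply Prod.ext
    · show x.1 = x.1 + gp q g 0 * 0; ring
    · show x.2 = 0 + x.2; ring
  conv_lhs => rw [hpair]
  rw [hadd, stepH, stepQ]
  apply Prod.ext
  · show a * x.1 + gp q g 0 * (c * Sm q g x.2) = a * x.1 + c * Sm q g x.2
    rw [gp_zero C]; ring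
  · show (0 : ZMod q) + x.2 = x.2; ring

end Stmt19
namespace Stmt19

variable {p q : ℕ} {g : ZMod p}

theorem mod_eq_bounds {μ μ' : ℕ} (hq : 0 < q) (hμ1 : 1 < μ) (hμ2 : μ ≤ q)
    (hμ'1 : 1 < μ') (hμ'2 : μ' ≤ q) (h : μ % q = μ' % q) : μ = μ' := by
  rcases eq_or_lt_of_le hμ2 with h1 | h1 <;> rcases eq_or_lt_of_le hμ'2 with h2 | h2
  · omega
  · subst h1; rw [Nat.mod_self, Nat.mod_eq_of_lt h2] at h; omega
  · subst h2; rw [Nat.mod_self, Nat.mod_eq_of_lt h1] at h; omega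
  · rwa [Nat.mod_eq_of_lt h1, Nat.mod_eq_of_lt h2] at h

theorem part2 (C : Ctx p q g) (μ μ' : ℕ) (hμ1 : 1 < μ) (hμ2 : μ ≤ q)
    (hμ'1 : 1 < μ') (hμ'2 : μ' ≤ q) (hne : μ ≠ μ') :
    ¬∃ e : (ZMod p × ZMod q) ≃ (ZMod p × ZMod q),
      (∀ a b, e (mAdd p q g a b) = mAdd p q g (e a) (e b)) ∧
      (∀ a b, e (muMul p q g μ a b) = muMul p q g μ' (e a) (e b)) := by
  haveI := C.factp
  rintro ⟨e, hadd, hmul⟩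
  obtain ⟨a, c, hane, hform⟩ := autM C hadd e.injective
  have key := hmul ((0 : ZMod p), (1 : ZMod q)) ((1 : ZMod p), (0 : ZMod q))
  have h1 : muMul p q g μ ((0 : ZMod p), (1 : ZMod q)) ((1 : ZMod p), (0 : ZMod q)) =
      (gp q g ((μ : ZMod q) * 1), (1 : ZMod q)) := by
    rw [muMul_eq C]
    apply Prod.ext
    · show gp q g 0 * 0 + gp q g ((μ : ZMod q) * 1) * 1 = _
      rw [gp_zero C]; ring
    · show (1 : ZMod q) + 0 = 1; ring
  rw [h1, hform, hform, hform, muMul_eq C] at key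
  have k1 := congrArg Prod.fst key
  simp only [Sm_one C, Sm_zero C, gp_zero C,
    mul_zero, mul_one, zero_add, add_zero, one_mul] at k1
  have k2 : gp q g ((μ : ZMod q)) * a = gp q g ((μ' : ZMod q)) * a := by
    linear_combination k1
  have k3 : gp q g ((μ : ZMod q)) = gp q g ((μ' : ZMod q)) :=
    mul_right_cancel₀ hane k2
  have k4 : ((μ : ZMod q)) = ((μ' : ZMod q)) := gp_inj C k3
  have k5 : μ % q = μ' % q := by
    rwa [ZMod.natCast_eq_natCast_iff' ] at k4
  exact hne (mod_eq_bounds C.hq.pos hμ1 hμ2 hμ'1 hμ'2 k5)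

end Stmt19
namespace Stmt19

/-- wrapper type used to put a local group structure on `ZMod p`. -/
structure W (p : ℕ) where
  val : ZMod p

def wEquiv (p : ℕ) : W p ≃ ZMod p :=
  ⟨W.val, W.mk, fun _ => rfl, fun _ => rfl⟩

noncomputable instance instFintypeW (p : ℕ) [NeZero p] : Fintype (W p) :=
  Fintype.ofEquiv (ZMod p) (wEquiv p).symm

theorem card_W (p : ℕ) [NeZero p] : Fintype.card (W p) = p := by
  rw [Fintype.card_congr (wEquiv p), ZMod.card]

/-- the roots-of-unity lemma: every element of multiplicative order dividing `q`
other than 1 is a nontrivial power of `g`. -/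
theorem pow_of_order {p q : ℕ} {g : ZMod p} (C : Ctx p q g) {w : ZMod p}
    (h1 : w ^ q = 1) (h2 : w ≠ 1) : ∃ ν : ℕ, 1 ≤ ν ∧ ν ≤ q - 1 ∧ w = g ^ ν := by
  haveI := C.factp
  set P : Polynomial (ZMod p) := Polynomial.X ^ q - Polynomial.C 1 with hP
  have hPne : P ≠ 0 := Polynomial.X_pow_sub_C_ne_zero C.hq.pos 1
  have hdeg : P.natDegree = q := Polynomial.natDegree_X_pow_sub_C
  have hroot : ∀ z : ZMod p, z ^ q = 1 → z ∈ P.roots.toFinset := by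
    intro z hz
    rw [Multiset.mem_toFinset, Polynomial.mem_roots hPne]
    simp [Polynomial.IsRoot, hP, hz]
  set F : Finset (ZMod p) := (Finset.range q).image (fun i => g ^ i) with hF
  have hFcard : F.card = q := by
    rw [hF, Finset.card_image_of_injOn, Finset.card_range]
    intro i hi j hj hij
    simp only [Finset.coe_range, Set.mem_Iio] at hi hj
    have := C.pow_inj hij
    rw [ZMod.natCast_eq_natCast_iff'] at this
    rwa [Nat.mod_eq_of_lt hi, Nat.mod_eq_of_lt hj] at this
  have hFsub : F ⊆ P.roots.toFinset := by
    intro z hz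
    rw [hF, Finset.mem_image] at hz
    obtain ⟨i, _, rfl⟩ := hz
    exact hroot _ (by rw [← pow_mul, mul_comm, pow_mul, C.gq, one_pow])
  have hwF : w ∈ F := by
    by_contra hw
    have hsub : insert w F ⊆ P.roots.toFinset := by
      intro z hz
      rcases Finset.mem_insert.mp hz with rfl | hz
      · exact hroot _ h1
      · exact hFsub hz
    have hc1 : (insert w F).card = q + 1 := by
      rw [Finset.card_insert_of_notMem hw, hFcard]
    have hc2 : (insert w F).card ≤ P.roots.toFinset.card :=
      Finset.card_le_card hsub
    have hc3 : P.roots.toFinset.card ≤ Multiset.card P.roots :=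
      Multiset.toFinset_card_le _
    have hc4 : Multiset.card P.roots ≤ q := hdeg ▸ Polynomial.card_roots' P
    omega
  rw [hF, Finset.mem_image] at hwF
  obtain ⟨i, hi, hgi⟩ := hwF
  rw [Finset.mem_range] at hi
  have hine : i ≠ 0 := by
    rintro rfl
    rw [pow_zero] at hgi
    exact h2 hgi.symm
  exact ⟨i, by omega, by omega, hgi.symm⟩

end Stmt19
namespace Stmt19

variable {p q : ℕ} {g : ZMod p}

theorem op_right_cancel {A : Type*} {op : A → A → A} {e : A} {inv : A → A}
    (h : IsGroupOp op e inv) {a b c : A} (hbc : op b a = op c a) : b = c := by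
  have := congrArg (fun z => op z (inv a)) hbc
  simpa only [h.1, h.2.2.2.2, h.2.2.1] using this

theorem part3 (C : Ctx p q g) (A : Type) (add : A → A → A) (zero : A) (neg : A → A)
    (mul : A → A → A) (one : A) (inv : A → A)
    (hbr : IsSkewBrace add zero neg mul one inv)
    (he : ∃ e : A ≃ ZMod p × ZMod q, ∀ a b, e (add a b) = mAdd p q g (e a) (e b))
    (hker : ∀ a : A, (∀ b, mul a b = add a b) → a = zero) :
    ∃ μ : ℕ, 1 < μ ∧ μ ≤ q ∧
      ∃ e : A ≃ ZMod p × ZMod q,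
        (∀ a b, e (add a b) = mAdd p q g (e a) (e b)) ∧
        (∀ a b, e (mul a b) = muMul p q g μ (e a) (e b)) := by
  classical
  haveI := C.factp
  haveI := C.nzq
  haveI := C.nzp
  obtain ⟨e0, he0⟩ := he
  obtain ⟨hA, hM, hBR⟩ := hbr
  have hGadd := mAdd_group (g := g) C
  -- transported multiplication
  set mul' : (ZMod p × ZMod q) → (ZMod p × ZMod q) → (ZMod p × ZMod q) :=
    fun x y => e0 (mul (e0.symm x) (e0.symm y)) with hmul'
  set inv' : (ZMod p × ZMod q) → (ZMod p × ZMod q) :=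
    fun x => e0 (inv (e0.symm x)) with hinv'
  have hz : e0 zero = 0 := by
    apply op_idem_eq hGadd
    rw [← he0, hA.2.1]
  have hnegt : ∀ a : A, e0 (neg a) = mNeg p q g (e0 a) := by
    intro a
    exact op_inv_eq hGadd (by rw [← he0, hA.2.2.2.2, hz])
  have hsymm_add : ∀ x y, e0.symm (mAdd p q g x y) = add (e0.symm x) (e0.symm y) := by
    intro x y
    apply e0.injective
    rw [he0, Equiv.apply_symm_apply, Equiv.apply_symm_apply, Equiv.apply_symm_apply]
  have hmt : ∀ a b : A, e0 (mul a b) = mul' (e0 a) (e0 b) := by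
    intro a b
    rw [hmul']
    simp only [Equiv.symm_apply_apply]
  have hGM : IsGroupOp mul' (e0 one) inv' := by
    refine ⟨fun a b c => ?_, fun a => ?_, fun a => ?_, fun a => ?_, fun a => ?_⟩
    · simp only [hmul', Equiv.symm_apply_apply, hM.1]
    · simp only [hmul', Equiv.symm_apply_apply, hM.2.1, Equiv.apply_symm_apply]
    · simp only [hmul', Equiv.symm_apply_apply, hM.2.2.1, Equiv.apply_symm_apply]
    · simp only [hmul', hinv', Equiv.symm_apply_apply, hM.2.2.2.1]
    · simp only [hmul', hinv', Equiv.symm_apply_apply, hM.2.2.2.2]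
  have hBR' : ∀ a b c, mul' a (mAdd p q g b c) =
      mAdd p q g (mAdd p q g (mul' a b) (mNeg p q g a)) (mul' a c) := by
    intro a b c
    rw [hmul']
    simp only [hsymm_add, hBR, he0, hmt, hnegt, Equiv.apply_symm_apply]
  -- the circle identity is 0
  have hmul0 : ∀ a, mul' a 0 = a := by
    intro a
    have h1 := hBR' a 0 0
    rw [mAdd_zero_zero] at h1
    -- mul' a 0 = (mul' a 0 - a) + mul' a 0
    set X := mul' a 0 with hX
    have h2 : mAdd p q g (mAdd p q g X (mNeg p q g a)) X = mAdd p q g 0 X := by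
      rw [← h1, hGadd.2.1]
    have h3 : mAdd p q g X (mNeg p q g a) = 0 := op_right_cancel hGadd h2
    have h4 := op_inv_eq hGadd h3
    -- h4 : mNeg a = inv X, so X = a
    have h5 : mAdd p q g X (mNeg p q g a) = mAdd p q g a (mNeg p q g a) := by
      rw [h3, hGadd.2.2.2.2]
    exact op_right_cancel hGadd h5
  have hone0 : e0 one = 0 := by
    have := hmul0 (e0 one)
    rw [hGM.2.1] at this
    exact this.symm
  rw [hone0] at hGM
  have hker' : ∀ x : ZMod p × ZMod q,
      (∀ y, mul' x y = mAdd p q g x y) → x = 0 := by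
    intro x hx
    have h1 : e0.symm x = zero := by
      apply hker
      intro b
      apply e0.injective
      rw [hmt, Equiv.apply_symm_apply, he0, Equiv.apply_symm_apply, hx]
    rw [← hz, ← h1, Equiv.apply_symm_apply]
  -- the lambda map
  set lam : (ZMod p × ZMod q) → (ZMod p × ZMod q) → (ZMod p × ZMod q) :=
    fun a b => mAdd p q g (mNeg p q g a) (mul' a b) with hlam
  have negadd : ∀ a L, mAdd p q g (mNeg p q g a) (mAdd p q g a L) = L := by
    intro a L
    rw [← hGadd.1, hGadd.2.2.2.1, hGadd.2.1]
  have addneg : ∀ a L, mAdd p q g a (mAdd p q g (mNeg p q g a) L) = L := by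
    intro a L
    rw [← hGadd.1, hGadd.2.2.2.2, hGadd.2.1]
  have lmul : ∀ a b, mul' a b = mAdd p q g a (lam a b) := by
    intro a b
    rw [hlam, addneg]
  have lam_add : ∀ a b c, lam a (mAdd p q g b c) =
      mAdd p q g (lam a b) (lam a c) := by
    intro a b c
    simp only [hlam]
    rw [hBR', hGadd.1]
    exact (hGadd.1 _ _ _).symm
  have lam_inj : ∀ a, Function.Injective (lam a) := by
    intro a b1 b2 h
    simp only [hlam] at h
    have h1 : mul' a b1 = mul' a b2 := op_left_cancel hGadd h
    exact op_left_cancel hGM h1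
  have lam_hom : ∀ a b c, lam (mul' a b) c = lam a (lam b c) := by
    intro a b c
    apply op_left_cancel hGadd (a := mul' a b)
    rw [← lmul, hGM.1, lmul b c, hBR', lmul a (lam b c), hGadd.1, negadd]
  -- extract the (α, c) coordinates of each λ_a
  have hlamex : ∀ a, ∃ pr : ZMod p × ZMod p, pr.1 ≠ 0 ∧
      ∀ x, lam a x = (pr.1 * x.1 + pr.2 * Sm q g x.2, x.2) := by
    intro a
    obtain ⟨u, v, h1, h2⟩ := autM C (lam_add a) (lam_inj a)
    exact ⟨(u, v), h1, h2⟩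
  choose pr alne lamf using hlamex
  set al : (ZMod p × ZMod q) → ZMod p := fun a => (pr a).1 with hal
  set cc : (ZMod p × ZMod q) → ZMod p := fun a => (pr a).2 with hcc
  have mul'f : ∀ a b, mul' a b =
      (a.1 + gp q g a.2 * (al a * b.1 + cc a * Sm q g b.2), a.2 + b.2) := by
    intro a b
    rw [lmul a b, lamf a b, mAdd_eq]
  have m2 : ∀ a b, (mul' a b).2 = a.2 + b.2 := by
    intro a b; rw [mul'f]
  have pairzero : ((0 : ZMod p), (0 : ZMod q)) = (0 : ZMod p × ZMod q) := rfl
  have mneg0 : mNeg p q g 0 = 0 := by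
    rw [mNeg_eq C, ← pairzero]
    apply Prod.ext <;> simp
  have lam0 : ∀ b, lam 0 b = b := by
    intro b; simp only [hlam]; rw [hGM.2.1, mneg0, hGadd.2.1]
  have al0 : al 0 = 1 := by
    have h := lamf 0 ((1 : ZMod p), (0 : ZMod q))
    rw [lam0] at h
    have h1 := congrArg Prod.fst h
    simp only [Sm_zero C, mul_zero, mul_one, add_zero] at h1
    exact h1.symm
  have cc0 : cc 0 = 0 := by
    have h := lamf 0 ((0 : ZMod p), (1 : ZMod q))
    rw [lam0] at h
    have h1 := congrArg Prod.fst h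
    simp only [Sm_one C, mul_zero, mul_one, zero_add] at h1
    exact h1.symm
  have e10 : ∀ b, lam b ((1 : ZMod p), (0 : ZMod q)) = (al b, 0) := by
    intro b
    rw [lamf]
    apply Prod.ext
    · simp only [Sm_zero C, mul_zero, mul_one, add_zero]
      rfl
    · rfl
  have e01 : ∀ b, lam b ((0 : ZMod p), (1 : ZMod q)) = (cc b, 1) := by
    intro b
    rw [lamf]
    apply Prod.ext
    · simp only [Sm_one C, mul_zero, mul_one, zero_add]
      rfl
    · rfl
  have al_hom : ∀ a b, al (mul' a b) = al a * al b := by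
    intro a b
    have h := lam_hom a b ((1 : ZMod p), (0 : ZMod q))
    rw [e10, e10, lamf] at h
    have h1 := congrArg Prod.fst h
    simp only [Sm_zero C, mul_zero, mul_one, add_zero] at h1
    exact h1
  have cc_hom : ∀ a b, cc (mul' a b) = al a * cc b + cc a := by
    intro a b
    have h := lam_hom a b ((0 : ZMod p), (1 : ZMod q))
    rw [e01, e01, lamf] at h
    have h1 := congrArg Prod.fst h
    simp only [Sm_one C, mul_zero, mul_one, zero_add] at h1
    exact h1
  have laminj : ∀ a a', al a = al a' → cc a = cc a' → a = a' := by
    intro a a' h1 h2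
    have hfun : ∀ x, lam a x = lam a' x := fun x => by
      rw [lamf, lamf]
      show ((pr a).1 * x.1 + (pr a).2 * Sm q g x.2, x.2) = _
      rw [show (pr a).1 = al a from rfl, show (pr a).2 = cc a from rfl, h1, h2]
    have hu : ∀ y, lam (mul' (inv' a') a) y = y := by
      intro y
      rw [lam_hom, hfun, ← lam_hom, hGM.2.2.2.1, lam0]
    have hu0 : mul' (inv' a') a = 0 := by
      apply hker'
      intro y
      rw [lmul, hu y]
    have hcanc : mul' (inv' a') a = mul' (inv' a') a' := by rw [hu0, hGM.2.2.2.1]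
    exact op_left_cancel hGM hcanc
  -- the p-part subgroup
  have Hpair : ∀ x y : ZMod p, mul' (x, (0:ZMod q)) (y, 0) =
      ((mul' (x, (0:ZMod q)) (y, 0)).1, (0:ZMod q)) := by
    intro x y
    apply Prod.ext
    · rfl
    · rw [m2]; exact (add_zero _)
  have inv'H : ∀ x : ZMod p, inv' (x, (0:ZMod q)) =
      ((inv' (x, (0:ZMod q))).1, (0:ZMod q)) := by
    intro x
    apply Prod.ext
    · rfl
    · have h := m2 (inv' (x, (0:ZMod q))) (x, 0)
      rw [hGM.2.2.2.1] at h
      have h' : (0:ZMod q) = (inv' (x, (0:ZMod q))).2 + 0 := h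
      simpa using h'.symm
  letI instWG : Group (W p) :=
    { mul := fun u v => ⟨(mul' (u.val, 0) (v.val, 0)).1⟩
      one := ⟨0⟩
      inv := fun u => ⟨(inv' (u.val, 0)).1⟩
      mul_assoc := by
        intro u v w
        show W.mk (mul' ((mul' (u.val, 0) (v.val, 0)).1, 0) (w.val, 0)).1 =
          W.mk (mul' (u.val, 0) ((mul' (v.val, 0) (w.val, 0)).1, 0)).1
        rw [← Hpair, ← Hpair, hGM.1]
      one_mul := by
        intro v
        show W.mk (mul' ((0:ZMod p), (0:ZMod q)) (v.val, 0)).1 = v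
        rw [pairzero, hGM.2.1]
      mul_one := by
        intro v
        show W.mk (mul' (v.val, 0) ((0:ZMod p), (0:ZMod q))).1 = v
        rw [pairzero, hGM.2.2.1]
      inv_mul_cancel := by
        intro u
        show W.mk (mul' ((inv' (u.val, 0)).1, 0) (u.val, 0)).1 = ⟨0⟩
        rw [← inv'H, hGM.2.2.2.1]
        rfl }
  have alpow : ∀ (u : W p) (n : ℕ), al ((u ^ n).val, 0) = al (u.val, 0) ^ n := by
    intro u n
    induction n with
    | zero =>
        rw [pow_zero, pow_zero]
        show al ((0:ZMod p), (0:ZMod q)) = 1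
        rw [pairzero, al0]
    | succ n ih =>
        rw [pow_succ, pow_succ, ← ih]
        show al ((mul' (((u^n).val : ZMod p), 0) (u.val, 0)).1, 0) = _
        rw [← Hpair, al_hom]
  have alH : ∀ x : ZMod p, al (x, (0:ZMod q)) = 1 := by
    intro x
    have h1 : al (x, (0:ZMod q)) ^ p = 1 := by
      have h := alpow ⟨x⟩ (Fintype.card (W p))
      rw [pow_card_eq_one, card_W p] at h
      have h' : al ((0:ZMod p), (0:ZMod q)) = al ((⟨x⟩ : W p).val, 0) ^ p := h
      rw [pairzero, al0] at h'
      exact h'.symm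
    have h2 : al (x, (0:ZMod q)) ^ (p - 1) = 1 :=
      ZMod.pow_card_sub_one_eq_one (alne ((x : ZMod p), (0:ZMod q)))
    have h3 : al (x, (0:ZMod q)) ^ p = al (x, (0:ZMod q)) := by
      have h4 : al (x, (0:ZMod q)) ^ p = al (x, (0:ZMod q)) ^ (p-1) * al (x, (0:ZMod q)) := by
        rw [← pow_succ]
        congr 1
        have := C.hp.two_le
        omega
      rw [h4, h2, one_mul]
    rw [h3] at h1
    exact h1
  have Hplus : ∀ x y : ZMod p, mul' (x, (0:ZMod q)) (y, 0) = (x + y, (0:ZMod q)) := by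
    intro x y
    rw [mul'f]
    apply Prod.ext
    · show x + gp q g (0:ZMod q) * (al (x, (0:ZMod q)) * y +
        cc (x, (0:ZMod q)) * Sm q g (0:ZMod q)) = x + y
      rw [gp_zero C, Sm_zero C, alH]
      ring
    · show (0:ZMod q) + 0 = 0
      ring
  have ccH : ∀ x : ZMod p, cc (x, (0:ZMod q)) = cc ((1:ZMod p), (0:ZMod q)) * x := by
    have hrec : ∀ n : ℕ, cc (((n:ℕ) : ZMod p), (0:ZMod q)) =
        cc ((1:ZMod p), (0:ZMod q)) * (n : ZMod p) := by
      intro n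
      induction n with
      | zero => rw [Nat.cast_zero, pairzero, cc0, mul_zero]
      | succ n ih =>
          have h := cc_hom ((1:ZMod p), (0:ZMod q)) (((n:ℕ) : ZMod p), (0:ZMod q))
          rw [Hplus, alH] at h
          have harg : ((1:ZMod p) + (n : ZMod p), (0:ZMod q)) =
              (((n+1 : ℕ) : ZMod p), (0:ZMod q)) := by
            apply Prod.ext
            · show (1:ZMod p) + (n : ZMod p) = ((n+1 : ℕ) : ZMod p)
              push_cast; ring
            · rfl
          rw [harg] at h
          rw [h, ih]
          push_cast; ring
    intro x
    have := hrec x.val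
    rwa [ZMod.natCast_val, ZMod.cast_id] at this
  set β := cc ((1:ZMod p), (0:ZMod q)) with hβ
  have βne : β ≠ 0 := by
    intro h0
    have hlamid : ∀ y, lam ((1:ZMod p), (0:ZMod q)) y = y := by
      intro y
      rw [lamf]
      show (al ((1:ZMod p), (0:ZMod q)) * y.1 + cc ((1:ZMod p), (0:ZMod q)) * Sm q g y.2, y.2) = y
      rw [alH, ← hβ, h0]
      apply Prod.ext
      · show 1 * y.1 + 0 * Sm q g y.2 = y.1
        ring
      · rfl
    have h1 : ((1:ZMod p), (0:ZMod q)) = (0 : ZMod p × ZMod q) := by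
      apply hker'
      intro y
      rw [lmul, hlamid y]
    exact one_ne_zero (congrArg Prod.fst h1)
  have decomp : ∀ a : ZMod p × ZMod q,
      mul' ((0:ZMod p), a.2)
        (gp q g (-a.2) * (al ((0:ZMod p), a.2))⁻¹ * a.1, (0:ZMod q)) = a := by
    intro a
    rw [mul'f]
    apply Prod.ext
    · show (0:ZMod p) + gp q g a.2 * (al ((0:ZMod p), a.2) *
        (gp q g (-a.2) * (al ((0:ZMod p), a.2))⁻¹ * a.1) +
        cc ((0:ZMod p), a.2) * Sm q g (0:ZMod q)) = a.1
      rw [Sm_zero C]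
      have h1 := gp_neg_cancel C a.2
      have h2 : al ((0:ZMod p), a.2) * (al ((0:ZMod p), a.2))⁻¹ = 1 :=
        mul_inv_cancel₀ (alne _)
      linear_combination (gp q g a.2 * gp q g (-a.2) * a.1) * h2 + a.1 * h1
    · show a.2 + 0 = a.2
      ring
  have alf : ∀ a : ZMod p × ZMod q, al a = al ((0:ZMod p), a.2) := by
    intro a
    conv_lhs => rw [← decomp a]
    rw [al_hom, alH, mul_one]
  have ccf : ∀ a : ZMod p × ZMod q,
      cc a = β * gp q g (-a.2) * a.1 + cc ((0:ZMod p), a.2) := by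
    intro a
    conv_lhs => rw [← decomp a]
    rw [cc_hom, ccH]
    have h2 : al ((0:ZMod p), a.2) * (al ((0:ZMod p), a.2))⁻¹ = 1 :=
      mul_inv_cancel₀ (alne _)
    linear_combination (β * gp q g (-a.2) * a.1) * h2
  have alq : ∀ m m' : ZMod q, al ((0:ZMod p), m + m') =
      al ((0:ZMod p), m) * al ((0:ZMod p), m') := by
    intro m m'
    have h := al_hom ((0:ZMod p), m) ((0:ZMod p), m')
    rw [alf (mul' _ _), m2] at h
    exact h
  have walp : ∀ n : ℕ, al ((0:ZMod p), ((n:ℕ) : ZMod q)) =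
      al ((0:ZMod p), (1:ZMod q)) ^ n := by
    intro n
    induction n with
    | zero => rw [Nat.cast_zero, pairzero, al0, pow_zero]
    | succ n ih =>
        have harg : ((n+1 : ℕ) : ZMod q) = ((n:ℕ) : ZMod q) + 1 := by push_cast; ring
        rw [harg, alq, ih, pow_succ]
  have wq : al ((0:ZMod p), (1:ZMod q)) ^ q = 1 := by
    have h := walp q
    rw [ZMod.natCast_self, pairzero, al0] at h
    exact h.symm
  have wne1 : al ((0:ZMod p), (1:ZMod q)) ≠ 1 := by
    intro h1
    have hal1 : ∀ a : ZMod p × ZMod q, al a = 1 := by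
      intro a
      rw [alf]
      have h := walp a.2.val
      rw [ZMod.natCast_val, ZMod.cast_id] at h
      rw [h, h1, one_pow]
    have hinjcc : Function.Injective (fun a : ZMod p × ZMod q => cc a) := by
      intro a a' h
      exact laminj a a' (by rw [hal1, hal1]) h
    have hcard := Fintype.card_le_of_injective _ hinjcc
    simp only [Fintype.card_prod, ZMod.card] at hcard
    have hp2 := C.hp.two_le
    have hq2 := C.hq.two_le
    nlinarith
  obtain ⟨ν, hν1, hν2, hνval⟩ := pow_of_order C wq wne1
  have alν : ∀ m : ZMod q, al ((0:ZMod p), m) = gp q g ((ν : ZMod q) * m) := by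
    intro m
    have h1 := walp m.val
    rw [ZMod.natCast_val, ZMod.cast_id] at h1
    rw [h1, hνval, ← pow_mul]
    show g ^ (ν * m.val) = g ^ (((ν : ZMod q) * m).val)
    apply C.pow_eqc
    push_cast [ZMod.natCast_val, ZMod.cast_id]
    ring
  have hβval : β = g - 1 := by
    have h := cc_hom ((1:ZMod p), (0:ZMod q)) ((0:ZMod p), (1:ZMod q))
    have hm : mul' ((1:ZMod p), (0:ZMod q)) ((0:ZMod p), (1:ZMod q)) =
        ((1 + β : ZMod p), (1:ZMod q)) := by
      rw [mul'f]
      apply Prod.ext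
      · show (1:ZMod p) + gp q g (0:ZMod q) * (al ((1:ZMod p), (0:ZMod q)) * 0 +
          cc ((1:ZMod p), (0:ZMod q)) * Sm q g (1:ZMod q)) = 1 + β
        rw [gp_zero C, Sm_one C, alH, ← hβ]
        ring
      · show (0:ZMod q) + 1 = 1
        ring
    rw [hm, alH, ccf] at h
    have h3 : gp q g (-(1:ZMod q)) * (1 + β) = 1 := by
      apply mul_left_cancel₀ βne
      show β * (gp q g (-(1:ZMod q)) * (1 + β)) = β * 1
      have h' : β * gp q g (-(1:ZMod q)) * (1+β) + cc ((0:ZMod p), (1:ZMod q)) =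
          1 * cc ((0:ZMod p), (1:ZMod q)) + β := h
      linear_combination h'
    have h5 := gp_neg_cancel C (1:ZMod q)
    have h7 := gp_one C (g := g)
    linear_combination gp q g (1:ZMod q) * h3 - (1+β) * h5 + h7
  -- the cocycle relation for γ(m) = cc(0, m)
  have γrec : ∀ m m' : ZMod q, cc ((0:ZMod p), m + m') =
      gp q g ((ν:ZMod q) * m) * cc ((0:ZMod p), m') +
      gp q g (-m') * cc ((0:ZMod p), m) := by
    intro m m'
    have h := cc_hom ((0:ZMod p), m) ((0:ZMod p), m')
    have hm : mul' ((0:ZMod p), m) ((0:ZMod p), m') =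
        (gp q g m * (cc ((0:ZMod p), m) * Sm q g m'), m + m') := by
      rw [mul'f]
      apply Prod.ext
      · show (0:ZMod p) + gp q g m * (al ((0:ZMod p), m) * 0 +
          cc ((0:ZMod p), m) * Sm q g m') = _
        ring
      · rfl
    rw [hm, ccf, alν, hβval] at h
    have h2 := Sm_mul C m'
    have h3 := gp_neg_cancel C m'
    have h4 : gp q g (-(m+m')) * gp q g m = gp q g (-m') := by
      rw [← gp_add C]; congr 1; ring
    linear_combination h - ((g-1) * cc ((0:ZMod p), m) * Sm q g m') * h4 -
      (gp q g (-m') * cc ((0:ZMod p), m)) * h2 - cc ((0:ZMod p), m) * h3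
  -- closed form for γ
  obtain ⟨c0, hγf⟩ : ∃ c0 : ZMod p, ∀ m : ZMod q,
      cc ((0:ZMod p), m) = c0 * (gp q g (-m) - gp q g ((ν:ZMod q) * m)) := by
    by_cases hD : gp q g (-(1:ZMod q)) = gp q g ((ν:ZMod q))
    · -- degenerate case: ν ≡ -1, γ ≡ 0
      have hnb1 : -(1:ZMod q) = (ν:ZMod q) := gp_inj C hD
      -- first show γ(1) = 0
      have claim : ∀ n : ℕ, cc ((0:ZMod p), ((n:ℕ) : ZMod q)) * gp q g ((n:ℕ) : ZMod q) =
          (n : ZMod p) * g * cc ((0:ZMod p), (1:ZMod q)) := by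
        intro n
        induction n with
        | zero =>
            rw [Nat.cast_zero, pairzero, cc0]
            push_cast
            ring
        | succ n ih =>
            have harg : ((n+1:ℕ) : ZMod q) = ((n:ℕ):ZMod q) + 1 := by push_cast; ring
            rw [harg]
            have h := γrec ((n:ℕ):ZMod q) 1
            have hw : gp q g ((ν:ZMod q) * ((n:ℕ):ZMod q)) =
                gp q g (-((n:ℕ):ZMod q)) := by
              congr 1
              rw [← hnb1]; ring
            rw [hw] at h
            have hadd1 := gp_add C ((n:ℕ):ZMod q) 1
            have h3 := gp_neg_cancel C ((n:ℕ):ZMod q)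
            have h5 := gp_neg_cancel C (1:ZMod q)
            have h7 := gp_one C (g := g)
            push_cast
            linear_combination cc ((0:ZMod p), ((n:ℕ):ZMod q) + 1) * hadd1 +
              (gp q g ((n:ℕ):ZMod q) * gp q g 1) * h +
              (cc ((0:ZMod p), (1:ZMod q)) * gp q g 1) * h3 +
              (cc ((0:ZMod p), ((n:ℕ):ZMod q)) * gp q g ((n:ℕ):ZMod q)) * h5 +
              ih + cc ((0:ZMod p), (1:ZMod q)) * h7
      have hγ1 : cc ((0:ZMod p), (1:ZMod q)) = 0 := by
        have h := claim q
        rw [ZMod.natCast_self, pairzero, cc0] at h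
        have hqne : ((q:ℕ) : ZMod p) ≠ 0 := by
          rw [Ne, ZMod.natCast_eq_zero_iff]
          intro hdvd
          have h1 := Nat.le_of_dvd C.hq.pos hdvd
          have h2 := C.hlt
          omega
        have h' : ((q:ℕ) : ZMod p) * g * cc ((0:ZMod p), (1:ZMod q)) = 0 := by
          linear_combination -h
        rcases mul_eq_zero.mp h' with h'' | h''
        · rcases mul_eq_zero.mp h'' with h3 | h3
          · exact absurd h3 hqne
          · exact absurd h3 C.gne0
        · exact h''
      have claim0 : ∀ n : ℕ, cc ((0:ZMod p), ((n:ℕ) : ZMod q)) = 0 := by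
        intro n
        induction n with
        | zero => rw [Nat.cast_zero, pairzero, cc0]
        | succ n ih =>
            have harg : ((n+1:ℕ) : ZMod q) = ((n:ℕ):ZMod q) + 1 := by push_cast; ring
            rw [harg, γrec, hγ1, ih]
            ring
      refine ⟨0, fun m => ?_⟩
      have := claim0 m.val
      rw [ZMod.natCast_val, ZMod.cast_id] at this
      rw [this]; ring
    · -- generic case
      set D := gp q g (-(1:ZMod q)) - gp q g ((ν:ZMod q)) with hDdef
      have hDne : D ≠ 0 := sub_ne_zero.mpr hD
      set c0 := cc ((0:ZMod p), (1:ZMod q)) * D⁻¹ with hc0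
      have hγ1 : cc ((0:ZMod p), (1:ZMod q)) = c0 * D := by
        rw [hc0, mul_assoc, inv_mul_cancel₀ hDne, mul_one]
      have claim : ∀ n : ℕ, cc ((0:ZMod p), ((n:ℕ) : ZMod q)) =
          c0 * (gp q g (-((n:ℕ):ZMod q)) - gp q g ((ν:ZMod q) * ((n:ℕ):ZMod q))) := by
        intro n
        induction n with
        | zero =>
            rw [Nat.cast_zero, pairzero, cc0, neg_zero, mul_zero]
            ring
        | succ n ih =>
            have harg : ((n+1:ℕ) : ZMod q) = ((n:ℕ):ZMod q) + 1 := by push_cast; ring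
            rw [harg]
            have h := γrec ((n:ℕ):ZMod q) 1
            have ha1 : gp q g (-(((n:ℕ):ZMod q) + 1)) =
                gp q g (-((n:ℕ):ZMod q)) * gp q g (-(1:ZMod q)) := by
              rw [← gp_add C]; congr 1; ring
            have ha2 : gp q g ((ν:ZMod q) * (((n:ℕ):ZMod q) + 1)) =
                gp q g ((ν:ZMod q) * ((n:ℕ):ZMod q)) * gp q g ((ν:ZMod q)) := by
              rw [← gp_add C]; congr 1; ring
            rw [h, ha1, ha2, ih, hγ1, hDdef]
            ring
      refine ⟨c0, fun m => ?_⟩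
      have := claim m.val
      rwa [ZMod.natCast_val, ZMod.cast_id] at this
  -- final isomorphism
  have hq2 := C.hq.two_le
  refine ⟨ν + 1, by omega, by omega, ?_⟩
  have hmmcast : ((ν + 1 : ℕ) : ZMod q) = (ν : ZMod q) + 1 := by push_cast; ring
  let E : (ZMod p × ZMod q) ≃ (ZMod p × ZMod q) :=
    { toFun := fun x => (x.1 - c0 * Sm q g x.2, x.2)
      invFun := fun x => (x.1 + c0 * Sm q g x.2, x.2)
      left_inv := fun x => by
        apply Prod.ext
        · show x.1 - c0 * Sm q g x.2 + c0 * Sm q g x.2 = x.1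
          ring
        · rfl
      right_inv := fun x => by
        apply Prod.ext
        · show x.1 + c0 * Sm q g x.2 - c0 * Sm q g x.2 = x.1
          ring
        · rfl }
  have Eapp : ∀ x : ZMod p × ZMod q, E x = (x.1 - c0 * Sm q g x.2, x.2) := fun x => rfl
  have Eadd : ∀ x y, E (mAdd p q g x y) = mAdd p q g (E x) (E y) := by
    intro x y
    rw [Eapp, Eapp, Eapp]
    apply Prod.ext
    · show x.1 + gp q g x.2 * y.1 - c0 * Sm q g (x.2 + y.2) =
        (x.1 - c0 * Sm q g x.2) + gp q g x.2 * (y.1 - c0 * Sm q g y.2)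
      rw [Sm_add C]
      ring
    · rfl
  have Emul : ∀ x y, E (mul' x y) = muMul p q g (ν+1) (E x) (E y) := by
    intro x y
    rw [mul'f x y, Eapp, Eapp, Eapp, muMul_eq C]
    have hax : al x = gp q g ((ν:ZMod q) * x.2) := by rw [alf x, alν]
    have hcx : cc x = (g-1) * gp q g (-x.2) * x.1 +
        c0 * (gp q g (-x.2) - gp q g ((ν:ZMod q) * x.2)) := by
      rw [ccf x, hγf x.2, hβval]
    have hsplit : gp q g (((ν+1 : ℕ) : ZMod q) * x.2) =
        gp q g ((ν:ZMod q) * x.2) * gp q g x.2 := by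
      rw [← gp_add C]; congr 1; rw [hmmcast]; ring
    apply Prod.ext
    · show (x.1 + gp q g x.2 * (al x * y.1 + cc x * Sm q g y.2)) -
          c0 * Sm q g (x.2 + y.2) =
        gp q g y.2 * (x.1 - c0 * Sm q g x.2) +
          gp q g (((ν+1:ℕ) : ZMod q) * x.2) * (y.1 - c0 * Sm q g y.2)
      rw [hax, hcx, hsplit, Sm_add C]
      have h1 := gp_neg_cancel C x.2
      have h2 := Sm_mul C y.2
      have h3 := Sm_sym C x.2 y.2
      linear_combination ((g-1) * x.1 * Sm q g y.2 + c0 * Sm q g y.2) * h1 +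
        x.1 * h2 - c0 * h3
    · rfl
  refine ⟨e0.trans E, fun a b => ?_, fun a b => ?_⟩
  · show E (e0 (add a b)) = mAdd p q g (E (e0 a)) (E (e0 b))
    rw [he0]
    exact Eadd _ _
  · show E (e0 (mul a b)) = muMul p q g (ν+1) (E (e0 a)) (E (e0 b))
    rw [hmt]
    exact Emul _ _

end Stmt19

/-- Let `p > q` be primes with `p ≡ 1 (mod q)` and `g` of order `q` mod `p`.  For each
`1 < μ ≤ q`, the operations `(n,m) + (s,t) = (n + g^m s, m+t)` and
`(n,m) ∘ (s,t) = (g^t n + g^{μm} s, m+t)` make `A_μ = (ℤ_p × ℤ_q, +, ∘)` a skew brace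
with additive group `ℤ_p ⋊_g ℤ_q` whose `λ` map is injective (`ker λ = 0`); distinct
values of `μ` give non-isomorphic braces, and every skew brace with additive group
`ℤ_p ⋊_g ℤ_q` and `ker λ = 0` is isomorphic to some `A_μ`: there are exactly `q - 1`
isomorphism classes. -/
theorem stmt19 (p q : ℕ) (hp : p.Prime) (hq : q.Prime) (hlt : q < p)
    (hmod : p % q = 1) (g : ZMod p) (hg : orderOf g = q) :
    (∀ μ : ℕ, 1 < μ → μ ≤ q →
      IsSkewBrace (mAdd p q g) 0 (mNeg p q g) (muMul p q g μ) 0 (muInv p q g μ) ∧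
      Function.Injective (muLam p q g μ)) ∧
    (∀ μ μ' : ℕ, 1 < μ → μ ≤ q → 1 < μ' → μ' ≤ q → μ ≠ μ' →
      ¬∃ e : (ZMod p × ZMod q) ≃ (ZMod p × ZMod q),
        (∀ a b, e (mAdd p q g a b) = mAdd p q g (e a) (e b)) ∧
        (∀ a b, e (muMul p q g μ a b) = muMul p q g μ' (e a) (e b))) ∧
    (∀ (A : Type) (add : A → A → A) (zero : A) (neg : A → A)
        (mul : A → A → A) (one : A) (inv : A → A),
      IsSkewBrace add zero neg mul one inv →
      (∃ e : A ≃ ZMod p × ZMod q, ∀ a b, e (add a b) = mAdd p q g (e a) (e b)) →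
      (∀ a : A, (∀ b, mul a b = add a b) → a = zero) →
      ∃ μ : ℕ, 1 < μ ∧ μ ≤ q ∧
        ∃ e : A ≃ ZMod p × ZMod q,
          (∀ a b, e (add a b) = mAdd p q g (e a) (e b)) ∧
          (∀ a b, e (mul a b) = muMul p q g μ (e a) (e b))) := by
  have C : Stmt19.Ctx p q g := ⟨hp, hq, hlt, hmod, hg⟩
  refine ⟨fun μ hμ1 hμ2 => ⟨⟨Stmt19.mAdd_group C, Stmt19.muMul_group C μ,
      Stmt19.brace_law C μ⟩, Stmt19.muLam_inj C μ hμ1 hμ2⟩, ?_, ?_⟩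
  · intro μ μ' h1 h2 h3 h4 h5
    exact Stmt19.part2 C μ μ' h1 h2 h3 h4 h5
  · intro A add zero neg mul one inv hbr he hker
    exact Stmt19.part3 C A add zero neg mul one inv hbr he hker
end
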